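/- arXiv:1706.07023 — 6 statements merged into one kernel-verified Lean document; each statement's English description precedes it below -/
import Mathlib

section
/- If g is a real Lie algebra and h, k are positive semidefinite symmetric bilinear forms on the dual space g*, viewed as elements of Sym²(g), then h # k is positive semidefinite. -/
open scoped BigOperators

/-- The coordinate form of the `#` operation on `Sym²(g)` (elements of `Sym²(g)` being
recorded by their coefficient matrices `h^{αβ}` in a chosen basis):
`(h#k)^{αβ} = c^α_{εδ} c^β_{γθ} h^{εγ} k^{δθ}`, where `c` are the structure constants. -/
def sharpMatR {ι : Type*} [Fintype ι] (c : ι → ι → ι → ℝ) (h k : ι → ι → ℝ) : ι → ι → ℝ :=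
  fun α β => ∑ ε, ∑ δ, ∑ γ, ∑ θ, c ε δ α * c γ θ β * h ε γ * k δ θ

/-- The quadratic square `h# = (1/2) h # h`. -/
noncomputable def sharpSqR {ι : Type*} [Fintype ι] (c : ι → ι → ι → ℝ) (h : ι → ι → ℝ) : ι → ι → ℝ :=
  fun α β => (1 / 2 : ℝ) * sharpMatR c h h α β

/-- Evaluation of a form `h ∈ Sym²(g)` on a dual vector `ξ ∈ g*` (given by coordinates). -/
def quadR {ι : Type*} [Fintype ι] (h : ι → ι → ℝ) (ξ : ι → ℝ) : ℝ :=
  ∑ α, ∑ β, ξ α * ξ β * h α β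

/-- A coefficient matrix is symmetric. -/
def SymmMatR {ι : Type*} (h : ι → ι → ℝ) : Prop := ∀ α β, h α β = h β α

/-- Positive semidefiniteness of a form on `g*`. -/
def PosSemidefR {ι : Type*} [Fintype ι] (h : ι → ι → ℝ) : Prop := ∀ ξ : ι → ℝ, 0 ≤ quadR h ξ

/-- Positive definiteness of a form on `g*`. -/
def PosDefR {ι : Type*} [Fintype ι] (h : ι → ι → ℝ) : Prop :=
  ∀ ξ : ι → ℝ, ξ ≠ 0 → 0 < quadR h ξ

/-- Structure constants of a Lie algebra relative to a basis. -/
noncomputable def structConst {ι : Type*} [Fintype ι] (L : Type*) [LieRing L] [LieAlgebra ℝ L]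
    (b : Module.Basis ι ℝ L) : ι → ι → ι → ℝ :=
  fun i j k => b.repr ⁅b i, b j⁆ k


private lemma sharp_key {ι : Type*} [Fintype ι] (c : ι → ι → ι → ℝ) (h : ι → ι → ℝ)
    (C : ι → ι → ℝ) (ξ : ι → ℝ) :
    quadR (sharpMatR c h (fun δ θ => ∑ j, C j δ * C j θ)) ξ
      = ∑ j, quadR h (fun ε => ∑ δ, (∑ α, ξ α * c ε δ α) * C j δ) := by
  simp only [quadR, sharpMatR]
  simp only [Finset.mul_sum, Finset.sum_mul]
  simp only [← Fintype.sum_prod_type']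
  refine Fintype.sum_equiv ⟨fun (p : ι×ι×ι×ι×ι×ι×ι) => (p.2.2.2.2.2.2, p.2.2.1, p.2.2.2.2.1, p.2.2.2.2.2.1, p.2.1, p.2.2.2.1, p.1),
    fun (q : ι×ι×ι×ι×ι×ι×ι) => (q.2.2.2.2.2.2, q.2.2.2.2.1, q.2.1, q.2.2.2.2.2.1, q.2.2.1, q.2.2.2.1, q.1),
    fun p => rfl, fun q => rfl⟩ _ _ ?_
  rintro ⟨a, b, e, d, g, t, j⟩
  dsimp
  ring

private lemma gram_decomp {ι : Type*} [Fintype ι] (k : ι → ι → ℝ)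
    (ksymm : SymmMatR k) (kpsd : PosSemidefR k) :
    ∃ C : ι → ι → ℝ, ∀ δ θ, k δ θ = ∑ j, C j δ * C j θ := by
  classical
  have hK : (Matrix.of k).PosSemidef := by
    refine Matrix.posSemidef_iff_dotProduct_mulVec.mpr ⟨?_, ?_⟩
    · ext δ θ
      simp [Matrix.conjTranspose_apply, ksymm δ θ]
    · intro x
      have := kpsd x
      simp only [quadR] at this
      simpa [dotProduct, Matrix.mulVec, dotProduct, Finset.mul_sum,
        mul_comm, mul_left_comm, mul_assoc] using this
  obtain ⟨B, hB⟩ : ∃ B : Matrix ι ι ℝ, Matrix.of k = Matrix.conjTranspose B * B := by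
    open scoped MatrixOrder Matrix.Norms.L2Operator in
    obtain ⟨B, hB⟩ := CStarAlgebra.nonneg_iff_eq_star_mul_self.mp hK.nonneg
    exact ⟨B, hB⟩
  refine ⟨fun j δ => B j δ, fun δ θ => ?_⟩
  have := congrFun (congrFun hB δ) θ
  simpa [Matrix.mul_apply, Matrix.conjTranspose_apply] using this

/-- if `g` is a real Lie algebra and `h, k` are positive semidefinite
symmetric bilinear forms on `g*` (elements of `Sym²(g)`, written in coordinates with
respect to a basis), then `h # k` is positive semidefinite. -/
theorem sharp_posSemidef {ι : Type*} [Fintype ι] (L : Type*) [LieRing L] [LieAlgebra ℝ L]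
    (b : Module.Basis ι ℝ L) (h k : ι → ι → ℝ)
    (hsymm : SymmMatR h) (ksymm : SymmMatR k)
    (hpsd : PosSemidefR h) (kpsd : PosSemidefR k) :
    PosSemidefR (sharpMatR (structConst L b) h k) := by
  obtain ⟨C, hC⟩ := gram_decomp k ksymm kpsd
  have hk : k = fun δ θ => ∑ j, C j δ * C j θ := funext fun δ => funext fun θ => hC δ θ
  intro ξ
  rw [hk, sharp_key]
  exact Finset.sum_nonneg fun j _ => hpsd _
end

section
/- If g is a real Lie algebra and h, k ∈ Sym²(g) are positive definite, then the kernel of h # k (viewed as a quadratic form on g*) equals the annihilator of the derived subalgebra [g,g] in g*. -/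
open scoped BigOperators


namespace SharpAux
open Matrix
variable {ι : Type*} [Fintype ι]

lemma quadR_zero (h : ι → ι → ℝ) : quadR h 0 = 0 := by simp [quadR]

lemma quadR_nonneg {h : ι → ι → ℝ} (hpd : PosDefR h) (ξ : ι → ℝ) : 0 ≤ quadR h ξ := by
  by_cases hξ : ξ = 0
  · simp [hξ, quadR_zero]
  · exact (hpd ξ hξ).le

lemma quadR_eq_zero_iff {h : ι → ι → ℝ} (hpd : PosDefR h) (ξ : ι → ℝ) :
    quadR h ξ = 0 ↔ ξ = 0 := by
  constructor
  · intro hq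
    by_contra hne
    exact (hpd ξ hne).ne' hq
  · rintro rfl; exact quadR_zero h

lemma posDef_of_posDefR {h : ι → ι → ℝ} (hsymm : SymmMatR h) (hpd : PosDefR h) :
    (Matrix.of h).PosDef := by
  rw [Matrix.posDef_iff_dotProduct_mulVec]
  constructor
  · ext α β
    simpa [Matrix.conjTranspose, Matrix.IsHermitian] using (hsymm β α)
  · intro x hx
    have : quadR h x = x ⬝ᵥ (Matrix.of h) *ᵥ x := by
      unfold quadR
      refine Finset.sum_congr rfl fun α _ => ?_
      simp [Matrix.mulVec, dotProduct, Finset.mul_sum]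
      exact Finset.sum_congr rfl fun β _ => by ring
    have h2 := hpd x hx
    rw [this] at h2
    simpa using h2

lemma sum5_reorder {β' : Type*} [AddCommMonoid β'] (t : ι → ι → ι → ι → ι → β') :
    ∑ a, ∑ b, ∑ c, ∑ d, ∑ e, t a b c d e = ∑ e, ∑ b, ∑ d, ∑ a, ∑ c, t a b c d e := by
  have h1 : ∑ a, ∑ b, ∑ c, ∑ d, ∑ e, t a b c d e
      = ∑ x : ι × ι × ι × ι × ι, t x.1 x.2.1 x.2.2.1 x.2.2.2.1 x.2.2.2.2 := by
    simp [Fintype.sum_prod_type]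
  have h2 : ∑ e, ∑ b, ∑ d, ∑ a, ∑ c, t a b c d e
      = ∑ y : ι × ι × ι × ι × ι, t y.2.2.2.1 y.2.1 y.2.2.2.2 y.2.2.1 y.1 := by
    simp [Fintype.sum_prod_type]
  rw [h1, h2]
  exact Fintype.sum_equiv
    ⟨fun x => (x.2.2.2.2, x.2.1, x.2.2.2.1, x.1, x.2.2.1),
     fun y => (y.2.2.2.1, y.2.1, y.2.2.2.2, y.2.2.1, y.1),
     fun x => rfl, fun y => rfl⟩ _ _ (fun x => rfl)

lemma sum6_reorder {β' : Type*} [AddCommMonoid β'] (t : ι → ι → ι → ι → ι → ι → β') :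
    ∑ a, ∑ b, ∑ c, ∑ d, ∑ e, ∑ f, t a b c d e f
      = ∑ c, ∑ d, ∑ e, ∑ f, ∑ a, ∑ b, t a b c d e f := by
  have h1 : ∑ a, ∑ b, ∑ c, ∑ d, ∑ e, ∑ f, t a b c d e f
      = ∑ x : (ι × ι) × (ι × ι × ι × ι), t x.1.1 x.1.2 x.2.1 x.2.2.1 x.2.2.2.1 x.2.2.2.2 := by
    simp [Fintype.sum_prod_type]
  have h2 : ∑ c, ∑ d, ∑ e, ∑ f, ∑ a, ∑ b, t a b c d e f
      = ∑ y : (ι × ι × ι × ι) × (ι × ι), t y.2.1 y.2.2 y.1.1 y.1.2.1 y.1.2.2.1 y.1.2.2.2 := by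
    simp [Fintype.sum_prod_type]
  rw [h1, h2]
  exact Fintype.sum_equiv (Equiv.prodComm _ _) _ _ (fun x => rfl)

lemma exists_decomp [DecidableEq ι] {h : ι → ι → ℝ} (hsymm : SymmMatR h) (hpd : PosDefR h) :
    ∃ A : Matrix ι ι ℝ, (∀ ε γ, h ε γ = ∑ p, A p ε * A p γ) ∧ A.det ≠ 0 := by
  have hPD := posDef_of_posDefR hsymm hpd
  obtain ⟨A, hA⟩ : ∃ A : Matrix ι ι ℝ, Matrix.of h = Aᴴ * A := by
    open scoped MatrixOrder in
    obtain ⟨B, hB⟩ := CStarAlgebra.nonneg_iff_eq_star_mul_self.mp hPD.posSemidef.nonneg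
    exact ⟨B, hB⟩
  refine ⟨A, fun ε γ => ?_, ?_⟩
  · have := congrFun (congrFun hA ε) γ
    simpa [Matrix.mul_apply, Matrix.conjTranspose_apply] using this
  · have hdet : (0:ℝ) < (Matrix.of h).det := hPD.det_pos
    rw [hA, Matrix.det_mul, Matrix.det_conjTranspose] at hdet
    intro h0
    rw [h0] at hdet
    simp at hdet

lemma key_iff [DecidableEq ι] {h k : ι → ι → ℝ} (hsymm : SymmMatR h) (ksymm : SymmMatR k)
    (hpd : PosDefR h) (kpd : PosDefR k) (M : Matrix ι ι ℝ) :
    (∑ ε, ∑ δ, ∑ γ, ∑ θ, h ε γ * k δ θ * M ε δ * M γ θ) = 0 ↔ ∀ ε δ, M ε δ = 0 := by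
  constructor
  · intro hS
    obtain ⟨A, hA, hdet⟩ := exists_decomp hsymm hpd
    have hrw : (∑ ε, ∑ δ, ∑ γ, ∑ θ, h ε γ * k δ θ * M ε δ * M γ θ)
        = ∑ p, quadR k (fun δ => ∑ ε, A p ε * M ε δ) := by
      calc (∑ ε, ∑ δ, ∑ γ, ∑ θ, h ε γ * k δ θ * M ε δ * M γ θ)
          = ∑ ε, ∑ δ, ∑ γ, ∑ θ, ∑ p, A p ε * A p γ * k δ θ * M ε δ * M γ θ := by
            refine Finset.sum_congr rfl fun ε _ => Finset.sum_congr rfl fun δ _ =>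
              Finset.sum_congr rfl fun γ _ => Finset.sum_congr rfl fun θ _ => ?_
            rw [hA ε γ]
            simp only [Finset.sum_mul]
        _ = ∑ p, ∑ δ, ∑ θ, ∑ ε, ∑ γ, A p ε * A p γ * k δ θ * M ε δ * M γ θ :=
            sum5_reorder _
        _ = ∑ p, quadR k (fun δ => ∑ ε, A p ε * M ε δ) := by
            refine Finset.sum_congr rfl fun p _ => ?_
            simp only [quadR, Finset.sum_mul, Finset.mul_sum]
            refine Finset.sum_congr rfl fun d _ => Finset.sum_congr rfl fun t _ => ?_
            rw [Finset.sum_comm]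
            refine Finset.sum_congr rfl fun x _ => Finset.sum_congr rfl fun y _ => ?_
            ring
    rw [hrw] at hS
    have hall : ∀ p ∈ Finset.univ, quadR k (fun δ => ∑ ε, A p ε * M ε δ) = 0 :=
      (Finset.sum_eq_zero_iff_of_nonneg fun p _ => quadR_nonneg kpd _).mp hS
    have hN : ∀ p δ, ∑ ε, A p ε * M ε δ = 0 := by
      intro p δ
      have := (quadR_eq_zero_iff kpd _).mp (hall p (Finset.mem_univ p))
      exact congrFun this δ
    have hAM : A * M = 0 := by
      ext p δ
      simpa [Matrix.mul_apply] using hN p δ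
    have : M = 0 := by
      have h1 : A⁻¹ * (A * M) = M := by
        rw [← Matrix.mul_assoc, Matrix.nonsing_inv_mul A (isUnit_iff_ne_zero.mpr hdet), Matrix.one_mul]
      rw [hAM, Matrix.mul_zero] at h1
      exact h1.symm
    intro ε δ
    rw [this]
    rfl
  · intro hM
    simp [hM]

end SharpAux

open SharpAux

/-- if `h, k ∈ Sym²(g)` are positive definite then the kernel of the
quadratic form `h # k` on `g*` equals the annihilator of the derived subalgebra
`[g,g]` in `g*` (a functional `ξ`, given by its coordinates, annihilates `[g,g]`
iff it vanishes on every bracket `⁅x, y⁆`). -/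
theorem sharp_kernel_eq_annihilator {ι : Type*} [Fintype ι] (L : Type*) [LieRing L]
    [LieAlgebra ℝ L] (b : Module.Basis ι ℝ L) (h k : ι → ι → ℝ)
    (hsymm : SymmMatR h) (ksymm : SymmMatR k)
    (hpd : PosDefR h) (kpd : PosDefR k) :
    ∀ ξ : ι → ℝ,
      quadR (sharpMatR (structConst L b) h k) ξ = 0 ↔
        ∀ x y : L, ∑ γ, (b.repr ⁅x, y⁆ γ) * ξ γ = 0 := by
  classical
  intro ξ
  set c : ι → ι → ι → ℝ := structConst L b with hc
  set M : Matrix ι ι ℝ := Matrix.of fun ε δ => ∑ α, c ε δ α * ξ α with hM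
  have step1 : quadR (sharpMatR c h k) ξ
      = ∑ ε, ∑ δ, ∑ γ, ∑ θ, h ε γ * k δ θ * M ε δ * M γ θ := by
    calc quadR (sharpMatR c h k) ξ
        = ∑ α, ∑ β, ∑ ε, ∑ δ, ∑ γ, ∑ θ,
            ξ α * ξ β * (c ε δ α * c γ θ β * h ε γ * k δ θ) := by
          simp only [quadR, sharpMatR, Finset.mul_sum]
      _ = ∑ ε, ∑ δ, ∑ γ, ∑ θ, ∑ α, ∑ β,
            ξ α * ξ β * (c ε δ α * c γ θ β * h ε γ * k δ θ) := sum6_reorder _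
      _ = ∑ ε, ∑ δ, ∑ γ, ∑ θ, h ε γ * k δ θ * M ε δ * M γ θ := by
          refine Finset.sum_congr rfl fun ε _ => Finset.sum_congr rfl fun δ _ =>
            Finset.sum_congr rfl fun γ _ => Finset.sum_congr rfl fun θ _ => ?_
          show _ = h ε γ * k δ θ * (∑ α, c ε δ α * ξ α) * (∑ β, c γ θ β * ξ β)
          simp only [Finset.sum_mul, Finset.mul_sum]
          rw [Finset.sum_comm]
          exact Finset.sum_congr rfl fun x _ => Finset.sum_congr rfl fun y _ => by ring
  rw [step1, key_iff hsymm ksymm hpd kpd M]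
  constructor
  · intro hMz x y
    have hann : ∀ ε δ, ∑ γ, (b.repr ⁅b ε, b δ⁆ γ) * ξ γ = 0 := fun ε δ => hMz ε δ
    have hx := b.sum_repr x
    have hy := b.sum_repr y
    have h2 : ∀ (X : L) (f : ι → L), ⁅X, (∑ δ, f δ)⁆ = ∑ δ, ⁅X, f δ⁆ := by
      intro X f
      rw [← LieAlgebra.ad_apply (R := ℝ), map_sum]
      simp [LieAlgebra.ad_apply]
    have h1 : ∀ (Y : L) (f : ι → L), ⁅(∑ ε, f ε), Y⁆ = ∑ ε, ⁅f ε, Y⁆ := by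
      intro Y f
      rw [← lie_skew, h2 Y f, ← Finset.sum_neg_distrib]
      exact Finset.sum_congr rfl fun ε _ => lie_skew (f ε) Y
    rw [← hx, ← hy]
    simp only [h1, h2, smul_lie, lie_smul, map_sum, _root_.map_smul, Finsupp.coe_finset_sum,
      Finset.sum_apply, Finsupp.coe_smul, Pi.smul_apply, smul_eq_mul, Finset.sum_mul]
    rw [Finset.sum_comm]
    refine Finset.sum_eq_zero fun ε _ => ?_
    rw [Finset.sum_comm]
    refine Finset.sum_eq_zero fun δ _ => ?_
    have hfac : ∑ γ, (b.repr y) δ * ((b.repr x) ε * (b.repr ⁅b ε, b δ⁆) γ) * ξ γ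
        = ((b.repr y) δ * (b.repr x) ε) * ∑ γ, (b.repr ⁅b ε, b δ⁆) γ * ξ γ := by
      rw [Finset.mul_sum]
      exact Finset.sum_congr rfl fun γ _ => by ring
    rw [hfac, hann ε δ, mul_zero]
  · intro hxy ε δ
    exact hxy (b ε) (b δ)
end

section
/- Monotonicity of the sharp square: if h, k ∈ Sym²(g) are positive semidefinite with h ≥ k ≥ 0, then h# := (1/2) h # h satisfies h# ≥ k#, where ≥ means the difference is positive semidefinite. -/
open scoped BigOperators

section Aux

variable {A B C D E : Type*} [Fintype A] [Fintype B] [Fintype C] [Fintype D] [Fintype E]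

private lemma pull1 (f : A → B → ℝ) : ∑ a, ∑ b, f a b = ∑ b, ∑ a, f a b := Finset.sum_comm

private lemma pull2 (f : A → B → C → ℝ) : ∑ a, ∑ b, ∑ x, f a b x = ∑ x, ∑ a, ∑ b, f a b x :=
  (Finset.sum_congr rfl fun _ _ => pull1 _).trans Finset.sum_comm

private lemma pull3 (f : A → B → C → D → ℝ) :
    ∑ a, ∑ b, ∑ c, ∑ x, f a b c x = ∑ x, ∑ a, ∑ b, ∑ c, f a b c x :=
  (Finset.sum_congr rfl fun _ _ => pull2 _).trans Finset.sum_comm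

private lemma pull4 (f : A → B → C → D → E → ℝ) :
    ∑ a, ∑ b, ∑ c, ∑ d, ∑ x, f a b c d x = ∑ x, ∑ a, ∑ b, ∑ c, ∑ d, f a b c d x :=
  (Finset.sum_congr rfl fun _ _ => pull3 _).trans Finset.sum_comm

end Aux

/-- The quadratic form of `a # b` is a sum of squares when `a` and `b` are given in
factorized form `a = PᵀP`, `b = QᵀQ`. -/
private lemma quad_sharp_eq_sum_sq {ι : Type*} [Fintype ι] (c : ι → ι → ι → ℝ)
    (P Q : ι → ι → ℝ) (ξ : ι → ℝ) :
    quadR (sharpMatR c (fun ε γ => ∑ i, P i ε * P i γ) (fun δ θ => ∑ j, Q j δ * Q j θ)) ξ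
      = ∑ i, ∑ j, (∑ α, ∑ ε, ∑ δ, ξ α * c ε δ α * P i ε * Q j δ) ^ 2 := by
  set t : ι → ι → ι → ι → ι → ℝ := fun i j α ε δ => ξ α * c ε δ α * P i ε * Q j δ with ht
  calc quadR (sharpMatR c (fun ε γ => ∑ i, P i ε * P i γ) (fun δ θ => ∑ j, Q j δ * Q j θ)) ξ
      = ∑ α, ∑ β, ∑ ε, ∑ δ, ∑ γ, ∑ θ, ∑ i, ∑ j,
          t i j α ε δ * t i j β γ θ := by
        refine Finset.sum_congr rfl fun α _ => Finset.sum_congr rfl fun β _ => ?_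
        show ξ α * ξ β * (∑ ε, ∑ δ, ∑ γ, ∑ θ,
            c ε δ α * c γ θ β * (∑ i, P i ε * P i γ) * (∑ j, Q j δ * Q j θ)) = _
        simp only [Finset.mul_sum, Finset.sum_mul]
        refine Finset.sum_congr rfl fun ε _ => Finset.sum_congr rfl fun δ _ =>
          Finset.sum_congr rfl fun γ _ => Finset.sum_congr rfl fun θ _ => ?_
        conv_lhs => rw [Finset.sum_comm]
        refine Finset.sum_congr rfl fun i _ => Finset.sum_congr rfl fun j _ => ?_
        simp only [ht]; ring
    _ = ∑ i, ∑ j, ∑ α, ∑ β, ∑ ε, ∑ δ, ∑ γ, ∑ θ, t i j α ε δ * t i j β γ θ := by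
        have h1 : ∀ α β : ι, (∑ ε, ∑ δ, ∑ γ, ∑ θ, ∑ i, ∑ j : ι,
            t i j α ε δ * t i j β γ θ)
            = ∑ i, ∑ j, ∑ ε, ∑ δ, ∑ γ, ∑ θ, t i j α ε δ * t i j β γ θ := by
          intro α β
          rw [pull4 (fun ε δ γ θ i => ∑ j, t i j α ε δ * t i j β γ θ)]
          exact Finset.sum_congr rfl fun i _ =>
            pull4 (fun ε δ γ θ j => t i j α ε δ * t i j β γ θ)
        simp only [h1]
        rw [pull2 (fun α β i => ∑ j, ∑ ε, ∑ δ, ∑ γ, ∑ θ, t i j α ε δ * t i j β γ θ)]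
        exact Finset.sum_congr rfl fun i _ =>
          pull2 (fun α β j => ∑ ε, ∑ δ, ∑ γ, ∑ θ, t i j α ε δ * t i j β γ θ)
    _ = ∑ i, ∑ j, (∑ α, ∑ ε, ∑ δ, t i j α ε δ) ^ 2 := by
        refine Finset.sum_congr rfl fun i _ => Finset.sum_congr rfl fun j _ => ?_
        rw [pow_two, Fintype.sum_mul_sum]
        refine Finset.sum_congr rfl fun α _ => Finset.sum_congr rfl fun β _ => ?_
        conv_lhs => rw [pull2 (fun ε δ γ => ∑ θ, t i j α ε δ * t i j β γ θ)]
        conv_lhs => enter [2, γ]; rw [pull2 (fun ε δ θ => t i j α ε δ * t i j β γ θ)]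
        simp only [Finset.sum_mul, Finset.mul_sum]

private lemma quadR_congr {ι : Type*} [Fintype ι] {f g : ι → ι → ℝ} (hfg : ∀ α β, f α β = g α β)
    (ξ : ι → ℝ) : quadR f ξ = quadR g ξ :=
  Finset.sum_congr rfl fun α _ => Finset.sum_congr rfl fun β _ => by rw [hfg]

private lemma quadR_sub {ι : Type*} [Fintype ι] (f g : ι → ι → ℝ) (ξ : ι → ℝ) :
    quadR (f - g) ξ = quadR f ξ - quadR g ξ := by
  simp only [quadR, Pi.sub_apply, mul_sub, Finset.sum_sub_distrib]

private lemma quadR_scale_add {ι : Type*} [Fintype ι] (s : ℝ) (f g : ι → ι → ℝ) (ξ : ι → ℝ) :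
    quadR (fun α β => s * (f α β + g α β)) ξ = s * (quadR f ξ + quadR g ξ) := by
  simp only [quadR, mul_add, Finset.mul_sum, Finset.sum_add_distrib]
  congr 1 <;> exact Finset.sum_congr rfl fun α _ => Finset.sum_congr rfl fun β _ => by ring

/-- Factorization of a symmetric positive semidefinite coefficient matrix. -/
private lemma exists_fact {ι : Type*} [Fintype ι] (a : ι → ι → ℝ) (hsy : SymmMatR a)
    (hpsd : PosSemidefR a) : ∃ P : ι → ι → ℝ, ∀ ε γ, a ε γ = ∑ i, P i ε * P i γ := by
  classical
  have hM : (Matrix.of a).PosSemidef := by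
    refine Matrix.PosSemidef.of_dotProduct_mulVec_nonneg ?_ ?_
    · show Matrix.conjTranspose (Matrix.of a) = Matrix.of a
      ext i j
      simp [Matrix.conjTranspose_apply, hsy j i]
    · intro x
      have := hpsd x
      have hx : quadR a x = dotProduct (star x) ((Matrix.of a).mulVec x) := by
        simp only [quadR, dotProduct, Matrix.mulVec, Finset.mul_sum]
        exact Finset.sum_congr rfl fun α _ => Finset.sum_congr rfl fun β _ => by
          simp [dotProduct]; ring
      rw [hx] at this
      exact this
  obtain ⟨B, hB⟩ : ∃ B : Matrix ι ι ℝ, Matrix.of a = Matrix.conjTranspose B * B := by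
    open scoped MatrixOrder Matrix.Norms.L2Operator in
    simpa only [Matrix.star_eq_conjTranspose] using
      CStarAlgebra.nonneg_iff_eq_star_mul_self.mp hM.nonneg
  refine ⟨fun i ε => B i ε, fun ε γ => ?_⟩
  have := congrFun (congrFun hB ε) γ
  simpa [Matrix.mul_apply, Matrix.conjTranspose_apply] using this

/-- `quadR` of `a # b` is nonnegative when `a` and `b` are symmetric positive semidefinite. -/
private lemma quad_sharp_nonneg {ι : Type*} [Fintype ι] (c : ι → ι → ι → ℝ)
    (a b : ι → ι → ℝ) (hasy : SymmMatR a) (hbsy : SymmMatR b)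
    (hapsd : PosSemidefR a) (hbpsd : PosSemidefR b) (ξ : ι → ℝ) :
    0 ≤ quadR (sharpMatR c a b) ξ := by
  obtain ⟨P, hP⟩ := exists_fact a hasy hapsd
  obtain ⟨Q, hQ⟩ := exists_fact b hbsy hbpsd
  have ha : a = fun ε γ => ∑ i, P i ε * P i γ := funext fun ε => funext fun γ => hP ε γ
  have hb : b = fun δ θ => ∑ j, Q j δ * Q j θ := funext fun δ => funext fun θ => hQ δ θ
  rw [ha, hb, quad_sharp_eq_sum_sq]
  exact Finset.sum_nonneg fun i _ => Finset.sum_nonneg fun j _ => sq_nonneg _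

/-- Pointwise decomposition `h# − k# = (1/2) ((h−k) # h + k # (h−k))`. -/
private lemma sharpSq_decomp {ι : Type*} [Fintype ι] (c : ι → ι → ι → ℝ) (h k : ι → ι → ℝ)
    (α β : ι) :
    (sharpSqR c h - sharpSqR c k) α β
      = (1 / 2 : ℝ) * (sharpMatR c (h - k) h α β + sharpMatR c k (h - k) α β) := by
  show sharpSqR c h α β - sharpSqR c k α β = _
  simp only [sharpSqR]
  rw [← mul_sub]
  congr 1
  simp only [sharpMatR, Pi.sub_apply, ← Finset.sum_sub_distrib, ← Finset.sum_add_distrib]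
  exact Finset.sum_congr rfl fun ε _ => Finset.sum_congr rfl fun δ _ =>
    Finset.sum_congr rfl fun γ _ => Finset.sum_congr rfl fun θ _ => by ring

/-- monotonicity of the sharp square: if `h, k ∈ Sym²(g)` are positive
semidefinite with `h ≥ k ≥ 0`, then `h# = (1/2) h # h` satisfies `h# ≥ k#`, where
`≥` means that the difference is positive semidefinite. -/
theorem sharpSq_monotone {ι : Type*} [Fintype ι] (L : Type*) [LieRing L] [LieAlgebra ℝ L]
    (b : Module.Basis ι ℝ L) (h k : ι → ι → ℝ)
    (hsymm : SymmMatR h) (ksymm : SymmMatR k)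
    (kpsd : PosSemidefR k) (hk : PosSemidefR (h - k)) :
    PosSemidefR (sharpSqR (structConst L b) h - sharpSqR (structConst L b) k) := by
  intro ξ
  set c := structConst L b
  have dsymm : SymmMatR (h - k) := fun α β => by
    simp only [Pi.sub_apply, hsymm α β, ksymm α β]
  have hpsd : PosSemidefR h := fun η => by
    have := hk η; rw [quadR_sub] at this
    have := kpsd η
    linarith [hk η, kpsd η, quadR_sub h k η]
  have step : quadR (sharpSqR c h - sharpSqR c k) ξ
      = (1 / 2 : ℝ) * (quadR (sharpMatR c (h - k) h) ξ + quadR (sharpMatR c k (h - k)) ξ) := by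
    rw [quadR_congr (sharpSq_decomp c h k) ξ, quadR_scale_add]
  rw [step]
  have h1 := quad_sharp_nonneg c (h - k) h dsymm hsymm hk hpsd ξ
  have h2 := quad_sharp_nonneg c k (h - k) ksymm dsymm kpsd hk ξ
  linarith
end

section
/- Comparison principle for the sharp ODE: if h(t), k(t) are solutions on [0,T) of the ODE ∂_t h = h# (with h# = (1/2) h # h) with positive semidefinite initial conditions satisfying h(0) ≥ k(0) ≥ 0, and both remain positive semidefinite on [0,T), then h(t) ≥ k(t) for all t ∈ [0,T). -/
open scoped BigOperators

section helpers
variable {ι : Type*} [Fintype ι]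

lemma pull1_s5 {M : Type*} [AddCommMonoid M] (g : ι → ι → M) :
    ∑ a, ∑ j, g a j = ∑ j, ∑ a, g a j := Finset.sum_comm

lemma pull2_s5 {M : Type*} [AddCommMonoid M] (g : ι → ι → ι → M) :
    ∑ a, ∑ b, ∑ j, g a b j = ∑ j, ∑ a, ∑ b, g a b j := by
  rw [← pull1_s5 (fun a j => ∑ b, g a b j)]
  exact Finset.sum_congr rfl fun a _ => pull1_s5 _

lemma pull3_s5 {M : Type*} [AddCommMonoid M] (g : ι → ι → ι → ι → M) :
    ∑ a, ∑ b, ∑ d, ∑ j, g a b d j = ∑ j, ∑ a, ∑ b, ∑ d, g a b d j := by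
  rw [← pull1_s5 (fun a j => ∑ b, ∑ d, g a b d j)]
  exact Finset.sum_congr rfl fun a _ => pull2_s5 _

lemma pull4_s5 {M : Type*} [AddCommMonoid M] (g : ι → ι → ι → ι → ι → M) :
    ∑ a, ∑ b, ∑ d, ∑ e, ∑ j, g a b d e j = ∑ j, ∑ a, ∑ b, ∑ d, ∑ e, g a b d e j := by
  rw [← pull1_s5 (fun a j => ∑ b, ∑ d, ∑ e, g a b d e j)]
  exact Finset.sum_congr rfl fun a _ => pull3_s5 _

lemma quadR_add (m m' : ι → ι → ℝ) (ξ : ι → ℝ) :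
    quadR (m + m') ξ = quadR m ξ + quadR m' ξ := by
  simp [quadR, mul_add, Finset.sum_add_distrib]

lemma quadR_sub_s5 (m m' : ι → ι → ℝ) (ξ : ι → ℝ) :
    quadR (m - m') ξ = quadR m ξ - quadR m' ξ := by
  simp [quadR, mul_sub, Finset.sum_sub_distrib]

lemma quadR_smul (r : ℝ) (m : ι → ι → ℝ) (ξ : ι → ℝ) :
    quadR (r • m) ξ = r * quadR m ξ := by
  simp only [quadR, Pi.smul_apply, smul_eq_mul, Finset.mul_sum]
  exact Finset.sum_congr rfl fun a _ => Finset.sum_congr rfl fun b _ => by ring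

lemma quadR_smul_vec (r : ℝ) (m : ι → ι → ℝ) (ξ : ι → ℝ) :
    quadR m (r • ξ) = r ^ 2 * quadR m ξ := by
  simp only [quadR, Pi.smul_apply, smul_eq_mul, Finset.mul_sum]
  exact Finset.sum_congr rfl fun a _ => Finset.sum_congr rfl fun b _ => by ring

lemma quadR_zero_vec (m : ι → ι → ℝ) : quadR m 0 = 0 := by simp [quadR]

lemma quadR_sharp_sub_right (c : ι → ι → ι → ℝ) (p q q' : ι → ι → ℝ) (ξ : ι → ℝ) :
    quadR (sharpMatR c p (q - q')) ξ
      = quadR (sharpMatR c p q) ξ - quadR (sharpMatR c p q') ξ := by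
  simp [quadR, sharpMatR, mul_sub, sub_mul, Finset.sum_sub_distrib]

lemma quadR_sharp_sub_left (c : ι → ι → ι → ℝ) (p p' q : ι → ι → ℝ) (ξ : ι → ℝ) :
    quadR (sharpMatR c (p - p') q) ξ
      = quadR (sharpMatR c p q) ξ - quadR (sharpMatR c p' q) ξ := by
  simp [quadR, sharpMatR, mul_sub, sub_mul, Finset.sum_sub_distrib]

lemma quadR_sharp_eq (c : ι → ι → ι → ℝ) (p q : ι → ι → ℝ) (ξ : ι → ℝ) :
    quadR (sharpMatR c p q) ξ
      = ∑ ε, ∑ δ, ∑ γ, ∑ θ,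
          (∑ α, ξ α * c ε δ α) * (∑ β, ξ β * c γ θ β) * (p ε γ * q δ θ) := by
  rw [show (∑ ε, ∑ δ, ∑ γ, ∑ θ,
      (∑ α, ξ α * c ε δ α) * (∑ β, ξ β * c γ θ β) * (p ε γ * q δ θ))
      = ∑ ε, ∑ δ, ∑ γ, ∑ θ, ∑ α, ∑ β,
        ξ α * ξ β * (c ε δ α * c γ θ β * p ε γ * q δ θ) from
    Finset.sum_congr rfl fun ε _ => Finset.sum_congr rfl fun δ _ =>
      Finset.sum_congr rfl fun γ _ => Finset.sum_congr rfl fun θ _ => by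
        rw [Finset.sum_mul_sum]
        simp only [Finset.sum_mul, Finset.mul_sum]
        exact Finset.sum_congr rfl fun α _ => Finset.sum_congr rfl fun β _ => by ring]
  rw [pull4_s5 (fun ε δ γ θ α => ∑ β, ξ α * ξ β * (c ε δ α * c γ θ β * p ε γ * q δ θ))]
  rw [show (∑ α, ∑ ε, ∑ δ, ∑ γ, ∑ θ, ∑ β, ξ α * ξ β * (c ε δ α * c γ θ β * p ε γ * q δ θ))
      = ∑ α, ∑ β, ∑ ε, ∑ δ, ∑ γ, ∑ θ, ξ α * ξ β * (c ε δ α * c γ θ β * p ε γ * q δ θ) from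
    Finset.sum_congr rfl fun α _ => pull4_s5 _]
  simp only [quadR, sharpMatR, Finset.mul_sum]


variable {ι : Type*} [Fintype ι]

lemma expand2 (f g : ι → ℝ) (r : ℝ) :
    (∑ d, f d) * (∑ t, g t) * r = ∑ d, ∑ t, f d * g t * r := by
  rw [Finset.sum_mul_sum, Finset.sum_mul]
  exact Finset.sum_congr rfl fun d _ => Finset.sum_mul _ _ _

lemma exists_factor (q : ι → ι → ℝ) (hs : SymmMatR q) (hq : PosSemidefR q) :
    ∃ C : ι → ι → ℝ, ∀ δ θ, q δ θ = ∑ j, C j δ * C j θ := by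
  classical
  have hQ : (Matrix.of q).PosSemidef := by
    refine Matrix.posSemidef_iff_dotProduct_mulVec.mpr ⟨?_, ?_⟩
    · ext a b
      simp only [Matrix.conjTranspose_apply, Matrix.of_apply, star_trivial]
      exact hs b a
    · intro x
      have e : dotProduct (star x) (Matrix.mulVec (Matrix.of q) x) = quadR q x := by
        simp only [dotProduct, Matrix.mulVec, Pi.star_apply, star_trivial, quadR,
          Matrix.of_apply, Finset.mul_sum]
        exact Finset.sum_congr rfl fun a _ => Finset.sum_congr rfl fun b _ => by ring
      rw [e]; exact hq x
  obtain ⟨B, hB⟩ : ∃ B : Matrix ι ι ℝ, Matrix.of q = Matrix.conjTranspose B * B := by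
    open scoped MatrixOrder in exact CStarAlgebra.nonneg_iff_eq_star_mul_self.mp hQ.nonneg
  refine ⟨fun j δ => B j δ, fun δ θ => ?_⟩
  have := congrArg (fun M : Matrix ι ι ℝ => M δ θ) hB
  simpa [Matrix.mul_apply, Matrix.conjTranspose_apply] using this

lemma quadR_sharp_nonneg (c : ι → ι → ι → ℝ) (p q : ι → ι → ℝ) (ξ : ι → ℝ)
    (hp : PosSemidefR p) (hqs : SymmMatR q) (hq : PosSemidefR q) :
    0 ≤ quadR (sharpMatR c p q) ξ := by
  obtain ⟨C, hC⟩ := exists_factor q hqs hq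
  have msum : ∀ (a : ℝ) (δ θ : ι), a * q δ θ = ∑ j, a * (C j δ * C j θ) := by
    intro a δ θ; rw [hC δ θ, Finset.mul_sum]
  have key : quadR (sharpMatR c p q) ξ
      = ∑ j, quadR p (fun e => ∑ δ, (∑ α, ξ α * c e δ α) * C j δ) := by
    rw [quadR_sharp_eq]
    have step1 : (∑ ε, ∑ δ, ∑ γ, ∑ θ,
          (∑ α, ξ α * c ε δ α) * (∑ β, ξ β * c γ θ β) * (p ε γ * q δ θ))
        = ∑ j, ∑ ε, ∑ δ, ∑ γ, ∑ θ,
          (∑ α, ξ α * c ε δ α) * (∑ β, ξ β * c γ θ β) * (p ε γ * (C j δ * C j θ)) := by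
      rw [← pull4_s5]
      refine Finset.sum_congr rfl fun ε _ => Finset.sum_congr rfl fun δ _ =>
        Finset.sum_congr rfl fun γ _ => Finset.sum_congr rfl fun θ _ => ?_
      rw [show (∑ α, ξ α * c ε δ α) * (∑ β, ξ β * c γ θ β) * (p ε γ * q δ θ)
          = ((∑ α, ξ α * c ε δ α) * (∑ β, ξ β * c γ θ β) * p ε γ) * q δ θ from by ring,
        msum]
      exact Finset.sum_congr rfl fun j _ => by ring
    rw [step1]
    refine Finset.sum_congr rfl fun j _ => ?_
    have swap : (∑ ε, ∑ δ, ∑ γ, ∑ θ,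
          (∑ α, ξ α * c ε δ α) * (∑ β, ξ β * c γ θ β) * (p ε γ * (C j δ * C j θ)))
        = ∑ ε, ∑ γ, ∑ δ, ∑ θ,
          (∑ α, ξ α * c ε δ α) * (∑ β, ξ β * c γ θ β) * (p ε γ * (C j δ * C j θ)) :=
      Finset.sum_congr rfl fun ε _ => Finset.sum_comm
    rw [swap]
    have rhs : quadR p (fun e => ∑ δ, (∑ α, ξ α * c e δ α) * C j δ)
        = ∑ ε, ∑ γ, ∑ δ, ∑ θ,
          ((∑ α, ξ α * c ε δ α) * C j δ) * ((∑ β, ξ β * c γ θ β) * C j θ) * p ε γ := by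
      simp only [quadR]
      exact Finset.sum_congr rfl fun ε _ => Finset.sum_congr rfl fun γ _ =>
        expand2 (fun δ => (∑ α, ξ α * c ε δ α) * C j δ)
          (fun θ => (∑ β, ξ β * c γ θ β) * C j θ) (p ε γ)
    rw [rhs]
    refine Finset.sum_congr rfl fun ε _ => Finset.sum_congr rfl fun γ _ =>
      Finset.sum_congr rfl fun δ _ => Finset.sum_congr rfl fun θ _ => by ring
  rw [key]
  exact Finset.sum_nonneg fun j _ => hp _

lemma abs_quadR_sharp_le (c : ι → ι → ι → ℝ) (p q : ι → ι → ℝ) (ξ : ι → ℝ)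
    (Mc Mp Mq : ℝ) (hMc0 : 0 ≤ Mc) (hMp0 : 0 ≤ Mp) (hMq0 : 0 ≤ Mq)
    (hc : ∀ i j l, |c i j l| ≤ Mc) (hp : ∀ i j, |p i j| ≤ Mp) (hq : ∀ i j, |q i j| ≤ Mq) :
    |quadR (sharpMatR c p q) ξ|
      ≤ (Fintype.card ι : ℝ) ^ 5 * Mc ^ 2 * Mp * Mq * ∑ α, ξ α ^ 2 := by
  classical
  have habsA : ∀ e d : ι, |∑ α, ξ α * c e d α| ≤ Mc * ∑ α, |ξ α| := by
    intro e d
    calc |∑ α, ξ α * c e d α| ≤ ∑ α, |ξ α * c e d α| := Finset.abs_sum_le_sum_abs _ _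
      _ ≤ ∑ α, Mc * |ξ α| := by
          refine Finset.sum_le_sum fun α _ => ?_
          rw [abs_mul, mul_comm]
          exact mul_le_mul_of_nonneg_right (hc _ _ _) (abs_nonneg _)
      _ = Mc * ∑ α, |ξ α| := by rw [Finset.mul_sum]
  set S := ∑ α, |ξ α| with hS
  have hS0 : 0 ≤ S := Finset.sum_nonneg fun _ _ => abs_nonneg _
  have hterm : ∀ ε δ γ θ : ι,
      |(∑ α, ξ α * c ε δ α) * (∑ β, ξ β * c γ θ β) * (p ε γ * q δ θ)|
        ≤ (Mc * S) * (Mc * S) * (Mp * Mq) := by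
    intro ε δ γ θ
    rw [abs_mul, abs_mul, abs_mul]
    have h1 := habsA ε δ
    have h2 := habsA γ θ
    have hMcS : 0 ≤ Mc * S := mul_nonneg hMc0 hS0
    refine mul_le_mul (mul_le_mul h1 h2 (abs_nonneg _) hMcS) ?_ ?_ (by positivity)
    · exact mul_le_mul (hp _ _) (hq _ _) (abs_nonneg _) hMp0
    · positivity
  have hsum : |quadR (sharpMatR c p q) ξ|
      ≤ (Fintype.card ι : ℝ) ^ 4 * ((Mc * S) * (Mc * S) * (Mp * Mq)) := by
    rw [quadR_sharp_eq]
    have B0 : (0:ℝ) ≤ (Mc * S) * (Mc * S) * (Mp * Mq) := by positivity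
    calc |∑ ε, ∑ δ, ∑ γ, ∑ θ, (∑ α, ξ α * c ε δ α) * (∑ β, ξ β * c γ θ β) * (p ε γ * q δ θ)|
        ≤ ∑ ε : ι, ∑ δ : ι, ∑ γ : ι, ∑ θ : ι, (Mc * S) * (Mc * S) * (Mp * Mq) := by
          refine (Finset.abs_sum_le_sum_abs _ _).trans (Finset.sum_le_sum fun ε _ => ?_)
          refine (Finset.abs_sum_le_sum_abs _ _).trans (Finset.sum_le_sum fun δ _ => ?_)
          refine (Finset.abs_sum_le_sum_abs _ _).trans (Finset.sum_le_sum fun γ _ => ?_)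
          refine (Finset.abs_sum_le_sum_abs _ _).trans (Finset.sum_le_sum fun θ _ => ?_)
          exact hterm ε δ γ θ
      _ = (Fintype.card ι : ℝ) ^ 4 * ((Mc * S) * (Mc * S) * (Mp * Mq)) := by
          simp [Finset.sum_const, Finset.card_univ]; ring
  have hSsq : S ^ 2 ≤ (Fintype.card ι : ℝ) * ∑ α, ξ α ^ 2 := by
    have := sq_sum_le_card_mul_sum_sq (s := (Finset.univ : Finset ι))
      (f := fun α => |ξ α|)
    simpa [sq_abs, Finset.card_univ] using this
  have hfin : (Fintype.card ι : ℝ) ^ 4 * ((Mc * S) * (Mc * S) * (Mp * Mq))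
      ≤ (Fintype.card ι : ℝ) ^ 5 * Mc ^ 2 * Mp * Mq * ∑ α, ξ α ^ 2 := by
    have e1 : (Fintype.card ι : ℝ) ^ 4 * ((Mc * S) * (Mc * S) * (Mp * Mq))
        = ((Fintype.card ι : ℝ) ^ 4 * Mc ^ 2 * Mp * Mq) * S ^ 2 := by ring
    have e2 : (Fintype.card ι : ℝ) ^ 5 * Mc ^ 2 * Mp * Mq * ∑ α, ξ α ^ 2
        = ((Fintype.card ι : ℝ) ^ 4 * Mc ^ 2 * Mp * Mq)
            * ((Fintype.card ι : ℝ) * ∑ α, ξ α ^ 2) := by ring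
    rw [e1, e2]
    exact mul_le_mul_of_nonneg_left hSsq (by positivity)
  exact hsum.trans hfin

lemma hasDerivWithinAt_quadR {w : ℝ → ι → ι → ℝ} {w' : ι → ι → ℝ} {S : Set ℝ} {x : ℝ}
    (hw : HasDerivWithinAt w w' S x) (ξ : ι → ℝ) :
    HasDerivWithinAt (fun t => quadR (w t) ξ) (quadR w' ξ) S x := by
  have hcomp : ∀ a b : ι, HasDerivWithinAt (fun t => w t a b) (w' a b) S x := by
    intro a b
    have l1 := ((ContinuousLinearMap.proj (R := ℝ) (φ := fun _ : ι => (ι → ℝ)) a).hasFDerivAt).comp_hasDerivWithinAt x hw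
    exact ((ContinuousLinearMap.proj (R := ℝ) (φ := fun _ : ι => ℝ) b).hasFDerivAt).comp_hasDerivWithinAt x l1
  simp only [quadR]
  refine HasDerivWithinAt.fun_sum fun a _ => HasDerivWithinAt.fun_sum fun b _ => ?_
  exact (hcomp a b).const_mul _

open Topology in
lemma tendsto_quadR {α : Type*} {l : Filter α}
    {w : α → ι → ι → ℝ} {e : α → ι → ℝ} {m : ι → ι → ℝ} {x : ι → ℝ}
    (hw : Filter.Tendsto w l (𝓝 m)) (he : Filter.Tendsto e l (𝓝 x)) :
    Filter.Tendsto (fun n => quadR (w n) (e n)) l (𝓝 (quadR m x)) := by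
  have hwab : ∀ a b', Filter.Tendsto (fun n => w n a b') l (𝓝 (m a b')) := by
    intro a b'
    exact (tendsto_pi_nhds.mp ((tendsto_pi_nhds.mp hw) a)) b'
  have hea : ∀ a, Filter.Tendsto (fun n => e n a) l (𝓝 (x a)) := tendsto_pi_nhds.mp he
  simp only [quadR]
  refine tendsto_finset_sum _ fun a _ => tendsto_finset_sum _ fun b' _ => ?_
  exact ((hea a).mul (hea b')).mul (hwab a b')

lemma quadR_ite [DecidableEq ι] (ξ : ι → ℝ) :
    quadR (fun a b => if a = b then (1:ℝ) else 0) ξ = ∑ a, ξ a ^ 2 := by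
  simp only [quadR, mul_ite, mul_one, mul_zero]
  refine Finset.sum_congr rfl fun a _ => ?_
  rw [Finset.sum_ite_eq]
  simp [sq]

end helpers

set_option maxHeartbeats 1000000 in
open Topology Filter in
open Set in
/-- comparison principle for the ODE `∂ₜ h = h#`: if `h(t)` and `k(t)`
are solutions on `[0, T)` with positive semidefinite initial data satisfying
`h(0) ≥ k(0) ≥ 0`, and both remain symmetric positive semidefinite on `[0, T)`,
then `h(t) ≥ k(t)` for all `t ∈ [0, T)`. -/
theorem sharp_ODE_comparison {ι : Type*} [Fintype ι] (L : Type*) [LieRing L] [LieAlgebra ℝ L]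
    (b : Module.Basis ι ℝ L) (T : ℝ) (hT : 0 < T) (h k : ℝ → ι → ι → ℝ)
    (hode : ∀ t ∈ Ico (0 : ℝ) T,
      HasDerivWithinAt h (sharpSqR (structConst L b) (h t)) (Ico (0 : ℝ) T) t)
    (kode : ∀ t ∈ Ico (0 : ℝ) T,
      HasDerivWithinAt k (sharpSqR (structConst L b) (k t)) (Ico (0 : ℝ) T) t)
    (hsymm : ∀ t ∈ Ico (0 : ℝ) T, SymmMatR (h t)) (ksymm : ∀ t ∈ Ico (0 : ℝ) T, SymmMatR (k t))
    (hpsd : ∀ t ∈ Ico (0 : ℝ) T, PosSemidefR (h t)) (kpsd : ∀ t ∈ Ico (0 : ℝ) T, PosSemidefR (k t))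
    (hk0 : PosSemidefR (h 0 - k 0)) :
    ∀ t ∈ Ico (0 : ℝ) T, PosSemidefR (h t - k t) := by
  classical
  set c := structConst L b with hcdef
  intro t₁ ht₁
  obtain ⟨ht₁0, ht₁T⟩ := ht₁
  have hIccIco : Icc (0:ℝ) t₁ ⊆ Ico (0:ℝ) T := fun x hx => ⟨hx.1, lt_of_le_of_lt hx.2 ht₁T⟩
  -- u = h - k and its derivative
  set u : ℝ → ι → ι → ℝ := fun t => h t - k t with hudef
  have hu' : ∀ t ∈ Ico (0:ℝ) T, HasDerivWithinAt u
      (sharpSqR c (h t) - sharpSqR c (k t)) (Ico (0:ℝ) T) t :=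
    fun t ht => (hode t ht).sub (kode t ht)
  -- bounds on h, k on [0, t₁]
  have hcont_h : ContinuousOn h (Icc 0 t₁) :=
    fun t ht => ((hode t (hIccIco ht)).continuousWithinAt).mono hIccIco
  have hcont_k : ContinuousOn k (Icc 0 t₁) :=
    fun t ht => ((kode t (hIccIco ht)).continuousWithinAt).mono hIccIco
  obtain ⟨Mh, hMh⟩ := (isCompact_Icc).exists_bound_of_continuousOn hcont_h
  obtain ⟨Mk, hMk⟩ := (isCompact_Icc).exists_bound_of_continuousOn hcont_k
  set M := max Mh Mk with hMdef
  have h0mem : (0:ℝ) ∈ Icc (0:ℝ) t₁ := ⟨le_refl _, ht₁0⟩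
  have hM0 : 0 ≤ M := le_trans (norm_nonneg (h 0)) (le_trans (hMh 0 h0mem) (le_max_left _ _))
  have hentry : ∀ (w : ι → ι → ℝ) (Mw : ℝ), ‖w‖ ≤ Mw → ∀ i j, |w i j| ≤ Mw := by
    intro w Mw hw i j
    have : ‖w i j‖ ≤ ‖w i‖ := norm_le_pi_norm (w i) j
    have h2 : ‖w i‖ ≤ ‖w‖ := norm_le_pi_norm w i
    rw [Real.norm_eq_abs] at this
    exact this.trans (h2.trans hw)
  have hhM : ∀ t ∈ Icc (0:ℝ) t₁, ∀ i j, |h t i j| ≤ M :=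
    fun t ht => hentry _ _ ((hMh t ht).trans (le_max_left _ _))
  have hkM : ∀ t ∈ Icc (0:ℝ) t₁, ∀ i j, |k t i j| ≤ M :=
    fun t ht => hentry _ _ ((hMk t ht).trans (le_max_right _ _))
  have hcb : ∀ i j l, |c i j l| ≤ ‖c‖ := by
    intro i j l
    have h1 : ‖c i j l‖ ≤ ‖c i j‖ := norm_le_pi_norm (c i j) l
    have h2 : ‖c i j‖ ≤ ‖c i‖ := norm_le_pi_norm (c i) j
    have h3 : ‖c i‖ ≤ ‖c‖ := norm_le_pi_norm c i
    rw [Real.norm_eq_abs] at h1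
    exact h1.trans (h2.trans h3)
  set n : ℝ := (Fintype.card ι : ℝ) with hndef
  set KK : ℝ := n ^ 5 * ‖c‖ ^ 2 * M with hKKdef
  have hKK0 : 0 ≤ KK := by positivity
  set lam : ℝ := KK + 1 with hlamdef
  set Idm : ι → ι → ℝ := fun a b => if a = b then (1:ℝ) else 0 with hIdm
  have hIdm_abs : ∀ i j, |Idm i j| ≤ 1 := by
    intro i j; by_cases hij : i = j <;> simp [hIdm, hij]
  have hIdm_symm : SymmMatR Idm := by
    intro a b; by_cases hab : a = b <;> simp [hIdm, hab, eq_comm]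
  have hquadIdm : ∀ ξ : ι → ℝ, quadR Idm ξ = ∑ a, ξ a ^ 2 := fun ξ => quadR_ite ξ
  -- main epsilon claim
  have key : ∀ ε : ℝ, 0 < ε → ∀ ξ : ι → ℝ,
      0 ≤ quadR (u t₁) ξ + (ε * Real.exp (lam * t₁)) * ∑ a, ξ a ^ 2 := by
    intro ε hε
    set E : ℝ → ℝ := fun t => ε * Real.exp (lam * t) with hEdef
    have hEpos : ∀ t, 0 < E t := fun t => mul_pos hε (Real.exp_pos _)
    set v : ℝ → ι → ι → ℝ := fun t => u t + E t • Idm with hvdef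
    have hv_entry : ∀ t a b', v t a b' = u t a b' + E t * Idm a b' := by
      intro t a b'; simp [hvdef]
    have hv_symm : ∀ t ∈ Ico (0:ℝ) T, SymmMatR (v t) := by
      intro t ht a b'
      rw [hv_entry, hv_entry, hIdm_symm a b']
      have : u t a b' = u t b' a := by
        simp only [hudef, Pi.sub_apply, hsymm t ht a b', ksymm t ht a b']
      rw [this]
    have hv_deriv : ∀ t ∈ Ico (0:ℝ) T, HasDerivWithinAt v
        (sharpSqR c (h t) - sharpSqR c (k t) + (ε * (Real.exp (lam * t) * lam)) • Idm)
        (Ico (0:ℝ) T) t := by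
      intro t ht
      have hexp : HasDerivAt (fun t => Real.exp (lam * t)) (Real.exp (lam * t) * lam) t := by
        simpa [Function.comp_def] using (Real.hasDerivAt_exp (lam * t)).comp t ((hasDerivAt_id t).const_mul lam)
      have hE : HasDerivAt E (ε * (Real.exp (lam * t) * lam)) t := hexp.const_mul ε
      exact (hu' t ht).add ((hE.smul_const Idm).hasDerivWithinAt)
    have hcont_v : ContinuousOn v (Icc 0 t₁) :=
      fun t ht => ((hv_deriv t (hIccIco ht)).continuousWithinAt).mono hIccIco
    -- strict positivity at time 0
    have hquadv : ∀ t ξ, quadR (v t) ξ = quadR (u t) ξ + E t * ∑ a, ξ a ^ 2 := by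
      intro t ξ
      rw [hvdef]
      simp only []
      rw [quadR_add, quadR_smul, hquadIdm]
    have hSqpos : ∀ ξ : ι → ℝ, ξ ≠ 0 → 0 < ∑ a, ξ a ^ 2 := by
      intro ξ hξ
      obtain ⟨a, ha⟩ := Function.ne_iff.mp hξ
      exact Finset.sum_pos' (fun i _ => sq_nonneg _) ⟨a, Finset.mem_univ a, lt_of_le_of_ne (sq_nonneg _) (Ne.symm (pow_ne_zero 2 ha))⟩
    have hv0pd : ∀ ξ : ι → ℝ, ξ ≠ 0 → 0 < quadR (v 0) ξ := by
      intro ξ hξ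
      rw [hquadv]
      have h1 : 0 ≤ quadR (u 0) ξ := hk0 ξ
      have h2 : 0 < E 0 := hEpos 0
      nlinarith [hSqpos ξ hξ]
    have hv0psd : PosSemidefR (v 0) := by
      intro ξ
      rcases eq_or_ne ξ 0 with rfl | hξ
      · rw [quadR_zero_vec]
      · exact (hv0pd ξ hξ).le
    -- claim : v t₁ is PSD
    have hvt₁ : PosSemidefR (v t₁) := by
      by_contra hbad
      set B : Set ℝ := {t | t ∈ Icc (0:ℝ) t₁ ∧ ¬ PosSemidefR (v t)} with hBdef
      have hBne : B.Nonempty := ⟨t₁, ⟨⟨ht₁0, le_refl _⟩, hbad⟩⟩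
      have hbdd : BddBelow B := ⟨0, fun t ht => ht.1.1⟩
      set s := sInf B with hsdef
      have hs_mem : s ∈ Icc (0:ℝ) t₁ :=
        ⟨le_csInf hBne fun t ht => ht.1.1, csInf_le hbdd ⟨⟨ht₁0, le_refl _⟩, hbad⟩⟩
      have hpsd_lt : ∀ t ∈ Icc (0:ℝ) t₁, t < s → PosSemidefR (v t) := by
        intro t ht hts
        by_contra hnot
        exact absurd (csInf_le hbdd ⟨ht, hnot⟩) (not_le.mpr hts)
      have psd_s : PosSemidefR (v s) := by
        rcases eq_or_lt_of_le hs_mem.1 with hs0 | hs0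
        · rw [← hs0]; exact hv0psd
        · intro ξ
          have hmem : s ∈ closure (Ioo (0:ℝ) s) := by
            rw [closure_Ioo hs0.ne]; exact ⟨hs_mem.1, le_refl _⟩
          haveI hNB : (𝓝[Ioo (0:ℝ) s] s).NeBot := mem_closure_iff_nhdsWithin_neBot.mp hmem
          have hIoosub : Ioo (0:ℝ) s ⊆ Icc (0:ℝ) t₁ :=
            fun x hx => ⟨hx.1.le, hx.2.le.trans hs_mem.2⟩
          have hvt : Filter.Tendsto v (𝓝[Ioo (0:ℝ) s] s) (𝓝 (v s)) :=
            (((hcont_v s hs_mem).mono hIoosub)).tendsto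
          have htd : Filter.Tendsto (fun t => quadR (v t) ξ) (𝓝[Ioo (0:ℝ) s] s)
              (𝓝 (quadR (v s) ξ)) := tendsto_quadR hvt tendsto_const_nhds
          refine ge_of_tendsto htd ?_
          filter_upwards [eventually_mem_nhdsWithin] with x hx
          exact hpsd_lt x (hIoosub hx) hx.2 ξ
      have hsnotB : s ∉ B := fun hsB => hsB.2 psd_s
      -- sequence of bad times decreasing to s
      have hseq : ∀ n : ℕ, ∃ t, t ∈ B ∧ t < s + 1/(n+1) := by
        intro n
        have hpos : (0:ℝ) < 1/(n+1) := by positivity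
        exact (csInf_lt_iff hbdd hBne).mp (by linarith)
      choose tt htB htlt using hseq
      have htgs : ∀ n, s ≤ tt n := fun n => csInf_le hbdd (htB n)
      have htt_tendsto : Filter.Tendsto tt Filter.atTop (𝓝 s) := by
        have hup : Filter.Tendsto (fun n : ℕ => s + 1/(n+1 : ℝ)) Filter.atTop (𝓝 (s + 0)) :=
          Filter.Tendsto.const_add s tendsto_one_div_add_atTop_nhds_zero_nat
        rw [add_zero] at hup
        exact tendsto_of_tendsto_of_tendsto_of_le_of_le tendsto_const_nhds hup
          htgs (fun n => (htlt n).le)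
      -- bad vectors, normalized
      have hbadvec : ∀ n : ℕ, ∃ ξ : ι → ℝ, quadR (v (tt n)) ξ < 0 := by
        intro n
        have := (htB n).2
        rw [PosSemidefR] at this
        push_neg at this
        obtain ⟨ξ, hξ⟩ := this
        exact ⟨ξ, hξ⟩
      choose ζ hζ using hbadvec
      have hζ0 : ∀ n, ζ n ≠ 0 := by
        intro n hn
        have hq := hζ n
        rw [hn, quadR_zero_vec] at hq
        exact lt_irrefl 0 hq
      set η : ℕ → (ι → ℝ) := fun n => ‖ζ n‖⁻¹ • ζ n with hηdef
      have hηsph : ∀ n, η n ∈ Metric.sphere (0 : ι → ℝ) 1 := by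
        intro n
        rw [mem_sphere_zero_iff_norm]
        exact norm_smul_inv_norm (hζ0 n)
      have hηneg : ∀ n, quadR (v (tt n)) (η n) < 0 := by
        intro n
        rw [hηdef]
        simp only []
        rw [quadR_smul_vec]
        have : 0 < ‖ζ n‖⁻¹ := inv_pos.mpr (norm_pos_iff.mpr (hζ0 n))
        exact mul_neg_of_pos_of_neg (by positivity) (hζ n)
      obtain ⟨xiL, hxiLmem, φ, hφmono, hφtend⟩ :=
        (isCompact_sphere (0 : ι → ℝ) 1).tendsto_subseq hηsph
      have hxiLnorm : ‖xiL‖ = 1 := mem_sphere_zero_iff_norm.mp hxiLmem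
      have hxiL0 : xiL ≠ 0 := by
        intro h0; rw [h0, norm_zero] at hxiLnorm; exact one_ne_zero hxiLnorm.symm
      -- limit: quadR (v s) xiL ≤ 0
      have hvtend : Filter.Tendsto (fun n => v (tt (φ n))) Filter.atTop (𝓝 (v s)) := by
        have h1 : Filter.Tendsto (fun n => tt (φ n)) Filter.atTop (𝓝[Icc (0:ℝ) t₁] s) := by
          rw [tendsto_nhdsWithin_iff]
          exact ⟨htt_tendsto.comp hφmono.tendsto_atTop,
            Filter.Eventually.of_forall fun n => (htB (φ n)).1⟩
        exact ((hcont_v s hs_mem).tendsto).comp h1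
      have hqtend : Filter.Tendsto (fun n => quadR (v (tt (φ n))) (η (φ n))) Filter.atTop
          (𝓝 (quadR (v s) xiL)) := by
        exact tendsto_quadR hvtend hφtend
      have hle0 : quadR (v s) xiL ≤ 0 :=
        le_of_tendsto hqtend (Filter.Eventually.of_forall fun n => (hηneg (φ n)).le)
      have heq0 : quadR (v s) xiL = 0 := le_antisymm hle0 (psd_s xiL)
      have hspos : 0 < s := by
        rcases eq_or_lt_of_le hs_mem.1 with hs0 | hs0
        · exfalso
          have := hv0pd xiL hxiL0
          rw [← hs0] at heq0
          rw [heq0] at this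
          exact lt_irrefl 0 this
        · exact hs0
      set Sq := ∑ a, xiL a ^ 2 with hSqdef
      have hSq : 0 < Sq := hSqpos xiL hxiL0
      -- derivative of f := quadR (v ·) xiL at s is strictly positive
      have hsIco : s ∈ Ico (0:ℝ) T := hIccIco hs_mem
      set Dm : ι → ι → ℝ :=
        sharpSqR c (h s) - sharpSqR c (k s) + (ε * (Real.exp (lam * s) * lam)) • Idm with hDmdef
      have hfD : HasDerivWithinAt (fun t => quadR (v t) xiL) (quadR Dm xiL) (Ico (0:ℝ) T) s :=
        hasDerivWithinAt_quadR (hv_deriv s hsIco) xiL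
      -- value of the derivative: strictly positive
      have hW_abs : ∀ i j, |(E s • Idm) i j| ≤ E s := by
        intro i j
        have : (E s • Idm) i j = E s * Idm i j := by simp
        rw [this, abs_mul, abs_of_pos (hEpos s)]
        calc E s * |Idm i j| ≤ E s * 1 :=
              mul_le_mul_of_nonneg_left (hIdm_abs i j) (hEpos s).le
          _ = E s := mul_one _
      have hu_eq : u s = v s - E s • Idm := by
        rw [hvdef]; simp only []; rw [add_sub_cancel_right]
      have hsplit : quadR (sharpSqR c (h s) - sharpSqR c (k s)) xiL
          = (1/2) * (quadR (sharpMatR c (h s) (u s)) xiL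
              + quadR (sharpMatR c (u s) (k s)) xiL) := by
        have e1 : sharpSqR c (h s) = (1/2 : ℝ) • sharpMatR c (h s) (h s) := rfl
        have e2 : sharpSqR c (k s) = (1/2 : ℝ) • sharpMatR c (k s) (k s) := rfl
        have e3 : u s = h s - k s := rfl
        rw [quadR_sub_s5, e1, e2, quadR_smul, quadR_smul, e3,
          quadR_sharp_sub_right c (h s) (h s) (k s) xiL,
          quadR_sharp_sub_left c (h s) (k s) (k s) xiL]
        ring
      have hQ1 : quadR (sharpMatR c (h s) (u s)) xiL
          = quadR (sharpMatR c (h s) (v s)) xiL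
            - quadR (sharpMatR c (h s) (E s • Idm)) xiL := by
        rw [hu_eq, quadR_sharp_sub_right]
      have hQ2 : quadR (sharpMatR c (u s) (k s)) xiL
          = quadR (sharpMatR c (v s) (k s)) xiL
            - quadR (sharpMatR c (E s • Idm) (k s)) xiL := by
        rw [hu_eq, quadR_sharp_sub_left]
      have pos1 : 0 ≤ quadR (sharpMatR c (h s) (v s)) xiL :=
        quadR_sharp_nonneg c (h s) (v s) xiL (hpsd s hsIco) (hv_symm s hsIco) psd_s
      have pos2 : 0 ≤ quadR (sharpMatR c (v s) (k s)) xiL :=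
        quadR_sharp_nonneg c (v s) (k s) xiL psd_s (ksymm s hsIco) (kpsd s hsIco)
      have bnd1 : |quadR (sharpMatR c (h s) (E s • Idm)) xiL|
          ≤ n ^ 5 * ‖c‖ ^ 2 * M * E s * Sq := by
        have := abs_quadR_sharp_le c (h s) (E s • Idm) xiL ‖c‖ M (E s)
          (norm_nonneg c) hM0 (hEpos s).le hcb (hhM s hs_mem) hW_abs
        calc |quadR (sharpMatR c (h s) (E s • Idm)) xiL|
            ≤ (Fintype.card ι : ℝ) ^ 5 * ‖c‖ ^ 2 * M * E s * ∑ a, xiL a ^ 2 := this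
          _ = n ^ 5 * ‖c‖ ^ 2 * M * E s * Sq := by rw [hndef, hSqdef]
      have bnd2 : |quadR (sharpMatR c (E s • Idm) (k s)) xiL|
          ≤ n ^ 5 * ‖c‖ ^ 2 * M * E s * Sq := by
        have := abs_quadR_sharp_le c (E s • Idm) (k s) xiL ‖c‖ (E s) M
          (norm_nonneg c) (hEpos s).le hM0 hcb hW_abs (hkM s hs_mem)
        calc |quadR (sharpMatR c (E s • Idm) (k s)) xiL|
            ≤ (Fintype.card ι : ℝ) ^ 5 * ‖c‖ ^ 2 * E s * M * ∑ a, xiL a ^ 2 := this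
          _ = n ^ 5 * ‖c‖ ^ 2 * M * E s * Sq := by rw [hndef, hSqdef]; ring
      have hDval : quadR Dm xiL
          = quadR (sharpSqR c (h s) - sharpSqR c (k s)) xiL + (lam * E s) * Sq := by
        rw [hDmdef, quadR_add, quadR_smul, hquadIdm]
        rw [hSqdef, hEdef]
        ring_nf
      have hDpos : 0 < quadR Dm xiL := by
        rw [hDval, hsplit, hQ1, hQ2]
        have hEsSq : 0 < E s * Sq := mul_pos (hEpos s) hSq
        have e1 : n ^ 5 * ‖c‖ ^ 2 * M * E s * Sq = KK * (E s * Sq) := by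
          rw [hKKdef]; ring
        have b1' : quadR (sharpMatR c (h s) (E s • Idm)) xiL ≤ KK * (E s * Sq) := by
          rw [← e1]; exact (abs_le.mp bnd1).2
        have b2' : quadR (sharpMatR c (E s • Idm) (k s)) xiL ≤ KK * (E s * Sq) := by
          rw [← e1]; exact (abs_le.mp bnd2).2
        have e2 : lam * E s * Sq = KK * (E s * Sq) + E s * Sq := by rw [hlamdef]; ring
        linarith [pos1, pos2, hEsSq, b1', b2', e2]
      -- but the derivative must be ≤ 0 : contradiction
      have hIoosub2 : Ioo (0:ℝ) s ⊆ Ico (0:ℝ) T :=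
        fun x hx => ⟨hx.1.le, hx.2.trans (lt_of_le_of_lt hs_mem.2 ht₁T)⟩
      have hfD' : HasDerivWithinAt (fun t => quadR (v t) xiL) (quadR Dm xiL) (Ioo 0 s) s :=
        hfD.mono hIoosub2
      have hdiffeq : Ioo (0:ℝ) s \ {s} = Ioo (0:ℝ) s := by
        apply Set.diff_singleton_eq_self
        exact fun hmem => lt_irrefl s hmem.2
      have hmemcl : s ∈ closure (Ioo (0:ℝ) s) := by
        rw [closure_Ioo hspos.ne]; exact ⟨hspos.le, le_refl _⟩
      haveI hNB2 : (𝓝[Ioo (0:ℝ) s] s).NeBot := mem_closure_iff_nhdsWithin_neBot.mp hmemcl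
      have hslope := hasDerivWithinAt_iff_tendsto_slope.mp hfD'
      rw [hdiffeq] at hslope
      have hcontra : quadR Dm xiL ≤ 0 := by
        refine le_of_tendsto hslope ?_
        filter_upwards [eventually_mem_nhdsWithin] with x hx
        have hfx : 0 ≤ quadR (v x) xiL :=
          hpsd_lt x ⟨hx.1.le, hx.2.le.trans hs_mem.2⟩ hx.2 xiL
        rw [slope_def_field, heq0, sub_zero]
        apply div_nonpos_of_nonneg_of_nonpos hfx
        linarith [hx.2]
      linarith
    -- conclude the epsilon claim
    intro ξ
    have := hvt₁ ξ
    rw [hquadv] at this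
    calc (0:ℝ) ≤ quadR (u t₁) ξ + E t₁ * ∑ a, ξ a ^ 2 := this
      _ = quadR (u t₁) ξ + (ε * Real.exp (lam * t₁)) * ∑ a, ξ a ^ 2 := by rw [hEdef]
  -- let ε → 0
  intro ξ
  have hterm : ∀ m : ℕ, 0 ≤ quadR (u t₁) ξ
      + (1/(m+1 : ℝ)) * (Real.exp (lam * t₁) * ∑ a, ξ a ^ 2) := by
    intro m
    have := key (1/(m+1 : ℝ)) (by positivity) ξ
    linarith [this, (by ring : (1/(m+1:ℝ) * Real.exp (lam * t₁)) * ∑ a, ξ a ^ 2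
      = 1/(m+1:ℝ) * (Real.exp (lam * t₁) * ∑ a, ξ a ^ 2))]
  have htend : Filter.Tendsto (fun m : ℕ => quadR (u t₁) ξ
      + (1/(m+1 : ℝ)) * (Real.exp (lam * t₁) * ∑ a, ξ a ^ 2)) Filter.atTop
      (𝓝 (quadR (u t₁) ξ)) := by
    have := (tendsto_one_div_add_atTop_nhds_zero_nat.mul_const
      (Real.exp (lam * t₁) * ∑ a, ξ a ^ 2)).const_add (quadR (u t₁) ξ)
    simpa using this
  exact ge_of_tendsto' htend hterm
end

section
/- If g is a compact simple real Lie algebra with invariant metric ⟨,⟩ and h is the dual form Σ e_i⊗e_i in an orthonormal basis, then h# = λ h for some λ > 0. -/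
open TensorProduct
open scoped BigOperators

section Aux

variable {ι : Type*} [Fintype ι] [DecidableEq ι] {L : Type*}
    [LieRing L] [LieAlgebra ℝ L]
    (B : L →ₗ[ℝ] L →ₗ[ℝ] ℝ) (b : Module.Basis ι ℝ L)

lemma aux_expand (hortho : ∀ i j : ι, B (b i) (b j) = if i = j then 1 else 0)
    (v : L) : ∑ i, B (b i) v • b i = v := by
  have h : (∑ i, LinearMap.smulRight (B (b i)) (b i)) = (LinearMap.id : L →ₗ[ℝ] L) := by
    refine b.ext fun j => ?_
    simp [LinearMap.sum_apply, hortho, ite_smul]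
  have := congrArg (fun f : L →ₗ[ℝ] L => f v) h
  simpa [LinearMap.sum_apply] using this

end Aux

section Aux2

variable {ι : Type*} [Fintype ι] [DecidableEq ι] {L : Type*}
    [LieRing L] [LieAlgebra ℝ L]
    (B : L →ₗ[ℝ] L →ₗ[ℝ] ℝ) (b : Module.Basis ι ℝ L)

/-- The Casimir-type operator. -/
noncomputable def auxT : Module.End ℝ L :=
  ∑ j, (LieAlgebra.ad ℝ L (b j)) ∘ₗ (LieAlgebra.ad ℝ L (b j))

lemma auxT_apply (x : L) : auxT b x = ∑ j, ⁅b j, ⁅b j, x⁆⁆ := by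
  simp [auxT, LinearMap.sum_apply]

lemma aux_BT (hBinv : ∀ x y z : L, B ⁅x, y⁆ z = B x ⁅y, z⁆) (x y : L) :
    B (auxT b x) y = -∑ j, B ⁅b j, x⁆ ⁅b j, y⁆ := by
  rw [auxT_apply, map_sum, LinearMap.sum_apply, ← Finset.sum_neg_distrib]
  refine Finset.sum_congr rfl fun j _ => ?_
  rw [← lie_skew (b j) ⁅b j, x⁆, map_neg, LinearMap.neg_apply, hBinv]

end Aux2

section Aux3

variable {ι : Type*} [Fintype ι] [DecidableEq ι] {L : Type*}
    [LieRing L] [LieAlgebra ℝ L]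
    (B : L →ₗ[ℝ] L →ₗ[ℝ] ℝ) (b : Module.Basis ι ℝ L)

lemma my_lie_sum {κ : Type*} (z : L) (s : Finset κ) (f : κ → L) :
    ⁅z, ∑ j ∈ s, f j⁆ = ∑ j ∈ s, ⁅z, f j⁆ :=
  map_sum (LieAlgebra.ad ℝ L z) f s

lemma my_sum_lie {κ : Type*} (s : Finset κ) (f : κ → L) (y : L) :
    ⁅∑ j ∈ s, f j, y⁆ = ∑ j ∈ s, ⁅f j, y⁆ :=
  map_sum ((LinearMap.mk₂ ℝ (fun x y : L => ⁅x, y⁆)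
    add_lie smul_lie lie_add lie_smul).flip y) f s

lemma aux_Tsymm (hBsymm : ∀ x y : L, B x y = B y x)
    (hBinv : ∀ x y z : L, B ⁅x, y⁆ z = B x ⁅y, z⁆) (x y : L) :
    B (auxT b x) y = B x (auxT b y) := by
  rw [aux_BT B b hBinv, hBsymm, aux_BT B b hBinv]
  congr 1
  exact Finset.sum_congr rfl fun j _ => hBsymm _ _

lemma aux_comm (hBsymm : ∀ x y : L, B x y = B y x)
    (hBinv : ∀ x y z : L, B ⁅x, y⁆ z = B x ⁅y, z⁆)
    (hortho : ∀ i j : ι, B (b i) (b j) = if i = j then 1 else 0)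
    (z x : L) : auxT b ⁅z, x⁆ = ⁅z, auxT b x⁆ := by
  rw [auxT_apply, auxT_apply, my_lie_sum]
  have key : ∀ j : ι, ⁅z, ⁅b j, ⁅b j, x⁆⁆⁆ - ⁅b j, ⁅b j, ⁅z, x⁆⁆⁆
      = ⁅⁅z, b j⁆, ⁅b j, x⁆⁆ + ⁅b j, ⁅⁅z, b j⁆, x⁆⁆ := by
    intro j
    rw [leibniz_lie z (b j) ⁅b j, x⁆, leibniz_lie z (b j) x, lie_add]
    abel
  have hzero : ∑ j, (⁅⁅z, b j⁆, ⁅b j, x⁆⁆ + ⁅b j, ⁅⁅z, b j⁆, x⁆⁆) = 0 := by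
    have hexp : ∀ j : ι, ⁅z, b j⁆ = ∑ k, B z ⁅b j, b k⁆ • b k := by
      intro j
      conv_lhs => rw [← aux_expand B b hortho ⁅z, b j⁆]
      refine Finset.sum_congr rfl fun k _ => ?_
      rw [hBsymm (b k) ⁅z, b j⁆, hBinv]
    set f : ι → ι → L := fun j k => ⁅b k, ⁅b j, x⁆⁆ + ⁅b j, ⁅b k, x⁆⁆ with hf
    have hrw : ∀ j : ι, ⁅⁅z, b j⁆, ⁅b j, x⁆⁆ + ⁅b j, ⁅⁅z, b j⁆, x⁆⁆
        = ∑ k, B z ⁅b j, b k⁆ • f j k := by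
      intro j
      conv_lhs => rw [hexp j, my_sum_lie, my_sum_lie, my_lie_sum]
      rw [← Finset.sum_add_distrib]
      refine Finset.sum_congr rfl fun k _ => ?_
      rw [smul_lie, smul_lie, lie_smul, ← smul_add]
    rw [Finset.sum_congr rfl fun j _ => hrw j]
    have hAneg : (∑ j, ∑ k, B z ⁅b j, b k⁆ • f j k)
        = -(∑ j, ∑ k, B z ⁅b j, b k⁆ • f j k) := by
      conv_lhs => rw [Finset.sum_comm]
      rw [← Finset.sum_neg_distrib]
      refine Finset.sum_congr rfl fun a _ => ?_
      rw [← Finset.sum_neg_distrib]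
      refine Finset.sum_congr rfl fun c _ => ?_
      have h2 : f c a = f a c := by simp only [hf]; abel
      have h3 : (⁅b c, b a⁆ : L) = -⁅b a, b c⁆ := (lie_skew (b c) (b a)).symm
      rw [h3, map_neg, neg_smul, h2]
    have hsum : (∑ j, ∑ k, B z ⁅b j, b k⁆ • f j k)
        + (∑ j, ∑ k, B z ⁅b j, b k⁆ • f j k) = 0 := by
      nth_rewrite 1 [hAneg]; exact neg_add_cancel _
    have h2 : (2 : ℝ) • (∑ j, ∑ k, B z ⁅b j, b k⁆ • f j k) = 0 := by
      rw [two_smul]; exact hsum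
    rcases smul_eq_zero.mp h2 with h | h
    · norm_num at h
    · exact h
  have hs := Finset.sum_congr rfl fun j (_ : j ∈ Finset.univ) => key j
  rw [Finset.sum_sub_distrib, hzero] at hs
  exact (sub_eq_zero.mp hs).symm

end Aux3

section Aux4

variable {ι : Type*} [Fintype ι] [DecidableEq ι] {L : Type*}
    [LieRing L] [LieAlgebra ℝ L] [Module.Finite ℝ L] [LieAlgebra.IsSimple ℝ L]
    (B : L →ₗ[ℝ] L →ₗ[ℝ] ℝ) (b : Module.Basis ι ℝ L)

lemma aux_scalar (hBsymm : ∀ x y : L, B x y = B y x)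
    (hBpos : ∀ x : L, x ≠ 0 → 0 < B x x)
    (hBinv : ∀ x y z : L, B ⁅x, y⁆ z = B x ⁅y, z⁆)
    (hortho : ∀ i j : ι, B (b i) (b j) = if i = j then 1 else 0) :
    ∃ μ : ℝ, μ < 0 ∧ ∀ x : L, auxT b x = μ • x := by
  have hBnn : ∀ x : L, 0 ≤ B x x := by
    intro x
    rcases eq_or_ne x 0 with h | h
    · simp [h]
    · exact (hBpos x h).le
  haveI hnontriv : Nontrivial L := by
    by_contra h
    rw [not_nontrivial_iff_subsingleton] at h
    exact LieAlgebra.IsSimple.non_abelian (R := ℝ) (L := L)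
      ⟨fun x m => Subsingleton.elim _ _⟩
  letI core : InnerProductSpace.Core ℝ L :=
    { inner := fun x y => B x y
      conj_inner_symm := fun x y => by simpa using hBsymm y x
      re_inner_nonneg := fun x => by simpa using hBnn x
      add_left := fun x y z => by simp
      smul_left := fun x y r => by simp
      definite := fun x hx => by
        by_contra h
        exact absurd hx (ne_of_gt (hBpos x h)) }
  letI : NormedAddCommGroup L := core.toNormedAddCommGroup
  letI : InnerProductSpace ℝ L := InnerProductSpace.ofCore core.toCore
  haveI : FiniteDimensional ℝ L := ‹Module.Finite ℝ L›
  have hTsymm : (auxT b : L →ₗ[ℝ] L).IsSymmetric := fun x y =>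
    aux_Tsymm B b hBsymm hBinv x y
  obtain ⟨μ, hμ⟩ : ∃ μ : ℝ, Module.End.HasEigenvalue (auxT b) μ :=
    ⟨_, hTsymm.hasEigenvalue_iSup_of_finiteDimensional⟩
  -- the eigenspace is a Lie ideal
  let I : LieIdeal ℝ L :=
    { Module.End.eigenspace (auxT b) μ with
      lie_mem := fun {x m} hm => by
        have hm' : auxT b m = μ • m := Module.End.mem_eigenspace_iff.mp hm
        have : auxT b ⁅x, m⁆ = μ • ⁅x, m⁆ := by
          rw [aux_comm B b hBsymm hBinv hortho, hm', lie_smul]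
        exact Module.End.mem_eigenspace_iff.mpr this }
  have hInebot : I ≠ ⊥ := by
    intro hbot
    obtain ⟨v, hv⟩ := hμ.exists_hasEigenvector
    have hvI : v ∈ I := hv.1
    rw [hbot] at hvI
    exact hv.2 ((LieSubmodule.mem_bot _).mp hvI)
  have hItop : I = ⊤ := (LieAlgebra.IsSimple.eq_bot_or_eq_top I).resolve_left hInebot
  have hscal : ∀ x : L, auxT b x = μ • x := by
    intro x
    have hx : x ∈ I := by rw [hItop]; exact LieSubmodule.mem_top _
    exact Module.End.mem_eigenspace_iff.mp hx
  refine ⟨μ, ?_, hscal⟩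
  -- sign analysis
  have hBTx : ∀ x : L, B x (auxT b x) = -∑ j, B ⁅b j, x⁆ ⁅b j, x⁆ := by
    intro x
    rw [hBsymm, aux_BT B b hBinv]
  have hμle : μ ≤ 0 := by
    obtain ⟨x, hx⟩ := exists_ne (0 : L)
    have h1 : B x (auxT b x) = μ * B x x := by rw [hscal x, map_smul]; rfl
    have h2 : B x (auxT b x) ≤ 0 := by
      rw [hBTx]
      have : 0 ≤ ∑ j, B ⁅b j, x⁆ ⁅b j, x⁆ :=
        Finset.sum_nonneg fun j _ => hBnn _
      linarith
    nlinarith [hBpos x hx]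
  rcases hμle.lt_or_eq with h | h
  · exact h
  · -- μ = 0 would make the algebra abelian
    exfalso
    have habel : ∀ y x : L, ⁅y, x⁆ = 0 := by
      intro y x
      have h0 : B x (auxT b x) = 0 := by rw [hscal x, h]; simp
      have hsum : ∑ j, B ⁅b j, x⁆ ⁅b j, x⁆ = 0 := by
        have h1 := hBTx x
        rw [h0] at h1
        linarith
      have hjzero : ∀ j : ι, ⁅b j, x⁆ = 0 := by
        intro j
        have := (Finset.sum_eq_zero_iff_of_nonneg
          (fun j _ => hBnn ⁅b j, x⁆)).mp hsum j (Finset.mem_univ j)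
        by_contra hne
        exact absurd this (ne_of_gt (hBpos _ hne))
      calc ⁅y, x⁆ = ⁅∑ i, B (b i) y • b i, x⁆ := by rw [aux_expand B b hortho]
        _ = ∑ i, B (b i) y • ⁅b i, x⁆ := by
            rw [my_sum_lie]
            exact Finset.sum_congr rfl fun i _ => smul_lie _ _ _
        _ = 0 := by simp [hjzero]
    exact LieAlgebra.IsSimple.non_abelian (R := ℝ) (L := L) ⟨fun x m => habel x m⟩

end Aux4

/-- The bracket of a Lie algebra as a bilinear map. -/
noncomputable def bracketBilin (R : Type*) (L : Type*) [CommRing R] [LieRing L]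
    [LieAlgebra R L] : L →ₗ[R] L →ₗ[R] L :=
  LinearMap.mk₂ R (fun x y => ⁅x, y⁆) add_lie smul_lie lie_add lie_smul

/-- The Hamilton-type `#` operation on the second tensor power of a Lie algebra,
determined on pure tensors by `(v1 ⊗ v2) # (w1 ⊗ w2) = ⁅v1, w1⁆ ⊗ ⁅v2, w2⁆`. -/
noncomputable def sharpT (R : Type*) (L : Type*) [CommRing R] [LieRing L] [LieAlgebra R L]
    (a b : L ⊗[R] L) : L ⊗[R] L :=
  TensorProduct.map (TensorProduct.lift (bracketBilin R L)) (TensorProduct.lift (bracketBilin R L))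
    (TensorProduct.tensorTensorTensorComm R L L L L (a ⊗ₜ[R] b))

/-- if `g` is a compact simple real Lie algebra (a simple real Lie algebra
carrying an ad-invariant positive definite symmetric bilinear form `B`, i.e. an invariant
metric) and `h = Σᵢ eᵢ ⊗ eᵢ` is the dual of the metric in a `B`-orthonormal basis `{eᵢ}`,
then `h# = λ h` for some `λ > 0`, where `h# = (1/2) h # h`. -/
theorem sharpSq_killing_dual_eigen {ι : Type*} [Fintype ι] [DecidableEq ι] (L : Type*)
    [LieRing L] [LieAlgebra ℝ L] [Module.Finite ℝ L] [LieAlgebra.IsSimple ℝ L]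
    (B : L →ₗ[ℝ] L →ₗ[ℝ] ℝ)
    (hBsymm : ∀ x y : L, B x y = B y x)
    (hBpos : ∀ x : L, x ≠ 0 → 0 < B x x)
    (hBinv : ∀ x y z : L, B ⁅x, y⁆ z = B x ⁅y, z⁆)
    (b : Module.Basis ι ℝ L)
    (hortho : ∀ i j : ι, B (b i) (b j) = if i = j then 1 else 0) :
    ∃ lam : ℝ, 0 < lam ∧
      (1 / 2 : ℝ) • sharpT ℝ L (∑ i, b i ⊗ₜ[ℝ] b i) (∑ i, b i ⊗ₜ[ℝ] b i) =
        lam • ∑ i, b i ⊗ₜ[ℝ] b i := by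
  obtain ⟨μ, hμneg, hscal⟩ := aux_scalar B b hBsymm hBpos hBinv hortho
  have hsharp : sharpT ℝ L (∑ i, b i ⊗ₜ[ℝ] b i) (∑ i, b i ⊗ₜ[ℝ] b i)
      = ∑ i, ∑ j, ⁅b i, b j⁆ ⊗ₜ[ℝ] ⁅b i, b j⁆ := by
    simp only [sharpT, sum_tmul, tmul_sum, map_sum,
      TensorProduct.tensorTensorTensorComm_tmul, TensorProduct.map_tmul,
      TensorProduct.lift.tmul, bracketBilin, LinearMap.mk₂_apply]
    exact Finset.sum_comm
  have hinner : ∀ k : ι, (∑ i, ∑ j, B (b k) ⁅b i, b j⁆ • ⁅b i, b j⁆) = -(μ • b k) := by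
    intro k
    have hj : ∀ jj : ι, (∑ i, B (b k) ⁅b i, b jj⁆ • ⁅b i, b jj⁆) = ⁅⁅b jj, b k⁆, b jj⁆ := by
      intro jj
      have hc : ∀ i, B (b k) ⁅b i, b jj⁆ = B (b i) ⁅b jj, b k⁆ := fun i => by
        rw [hBsymm (b k) ⁅b i, b jj⁆, hBinv]
      calc (∑ i, B (b k) ⁅b i, b jj⁆ • ⁅b i, b jj⁆)
          = ∑ i, B (b i) ⁅b jj, b k⁆ • ⁅b i, b jj⁆ :=
            Finset.sum_congr rfl fun i _ => by rw [hc i]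
        _ = ⁅∑ i, B (b i) ⁅b jj, b k⁆ • b i, b jj⁆ := by
            rw [my_sum_lie]
            exact Finset.sum_congr rfl fun i _ => (smul_lie _ _ _).symm
        _ = ⁅⁅b jj, b k⁆, b jj⁆ := by rw [aux_expand B b hortho]
    rw [Finset.sum_comm, Finset.sum_congr rfl fun jj _ => hj jj]
    have hneg : ∀ jj : ι, ⁅⁅b jj, b k⁆, b jj⁆ = -⁅b jj, ⁅b jj, b k⁆⁆ :=
      fun jj => (lie_skew _ _).symm
    rw [Finset.sum_congr rfl fun jj _ => hneg jj, Finset.sum_neg_distrib,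
      ← auxT_apply, hscal (b k)]
  have step1 : ∀ i j : ι, (⁅b i, b j⁆ ⊗ₜ[ℝ] ⁅b i, b j⁆)
      = ∑ k, B (b k) ⁅b i, b j⁆ • (b k ⊗ₜ[ℝ] ⁅b i, b j⁆) := by
    intro i j
    have e := aux_expand B b hortho ⁅b i, b j⁆
    calc (⁅b i, b j⁆ ⊗ₜ[ℝ] ⁅b i, b j⁆)
        = (∑ k, B (b k) ⁅b i, b j⁆ • b k) ⊗ₜ[ℝ] ⁅b i, b j⁆ := by rw [e]
      _ = ∑ k, B (b k) ⁅b i, b j⁆ • (b k ⊗ₜ[ℝ] ⁅b i, b j⁆) := by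
          rw [sum_tmul]
          exact Finset.sum_congr rfl fun k _ => by rw [← smul_tmul']
  have hmain : (∑ i, ∑ j, ⁅b i, b j⁆ ⊗ₜ[ℝ] ⁅b i, b j⁆)
      = (-μ) • ∑ k, b k ⊗ₜ[ℝ] b k := by
    calc (∑ i, ∑ j, ⁅b i, b j⁆ ⊗ₜ[ℝ] ⁅b i, b j⁆)
        = ∑ i, ∑ j, ∑ k, B (b k) ⁅b i, b j⁆ • (b k ⊗ₜ[ℝ] ⁅b i, b j⁆) :=
          Finset.sum_congr rfl fun i _ => Finset.sum_congr rfl fun j _ => step1 i j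
      _ = ∑ i, ∑ k, ∑ j, B (b k) ⁅b i, b j⁆ • (b k ⊗ₜ[ℝ] ⁅b i, b j⁆) :=
          Finset.sum_congr rfl fun i _ => Finset.sum_comm
      _ = ∑ k, ∑ i, ∑ j, B (b k) ⁅b i, b j⁆ • (b k ⊗ₜ[ℝ] ⁅b i, b j⁆) :=
          Finset.sum_comm
      _ = ∑ k, b k ⊗ₜ[ℝ] (∑ i, ∑ j, B (b k) ⁅b i, b j⁆ • ⁅b i, b j⁆) := by
          refine Finset.sum_congr rfl fun k _ => ?_
          simp only [tmul_sum, tmul_smul]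
      _ = ∑ k, b k ⊗ₜ[ℝ] (-(μ • b k)) := by
          refine Finset.sum_congr rfl fun k _ => ?_
          rw [hinner k]
      _ = (-μ) • ∑ k, b k ⊗ₜ[ℝ] b k := by
          rw [Finset.smul_sum]
          refine Finset.sum_congr rfl fun k _ => ?_
          rw [tmul_neg, tmul_smul, neg_smul]
  refine ⟨-μ / 2, by linarith, ?_⟩
  rw [hsharp, hmain, smul_smul]
  congr 1
  ring
end

section
/- For the system λ1' = λ2λ3, λ2' = λ1λ3, λ3' = λ1λ2 with positive initial data, the determinant D = λ1λ2λ3 satisfies D' = (λ2λ3)² + (λ1λ3)² + (λ1λ2)² ≥ 3 D^{4/3}, and consequently the solution blows up in finite time. -/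
open Set

/-- for the system `λ₁' = λ₂λ₃`, `λ₂' = λ₁λ₃`, `λ₃' = λ₁λ₂` with positive
data on a maximal interval `[0, T)`, the determinant `D = λ₁λ₂λ₃` satisfies
`D' = (λ₂λ₃)² + (λ₁λ₃)² + (λ₁λ₂)² ≥ 3 D^{4/3}`; consequently the solution blows up in
finite time: `T ≤ D(0)^{-1/3}`. -/
theorem determinant_ODE_blowup (T : ℝ) (hT : 0 < T) (l₁ l₂ l₃ : ℝ → ℝ)
    (hpos : ∀ t ∈ Ico (0 : ℝ) T, 0 < l₁ t ∧ 0 < l₂ t ∧ 0 < l₃ t)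
    (h₁ : ∀ t ∈ Ico (0 : ℝ) T, HasDerivWithinAt l₁ (l₂ t * l₃ t) (Ico (0 : ℝ) T) t)
    (h₂ : ∀ t ∈ Ico (0 : ℝ) T, HasDerivWithinAt l₂ (l₁ t * l₃ t) (Ico (0 : ℝ) T) t)
    (h₃ : ∀ t ∈ Ico (0 : ℝ) T, HasDerivWithinAt l₃ (l₁ t * l₂ t) (Ico (0 : ℝ) T) t) :
    (∀ t ∈ Ico (0 : ℝ) T,
        HasDerivWithinAt (fun s => l₁ s * l₂ s * l₃ s)
          ((l₂ t * l₃ t) ^ 2 + (l₁ t * l₃ t) ^ 2 + (l₁ t * l₂ t) ^ 2) (Ico (0 : ℝ) T) t ∧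
        3 * (l₁ t * l₂ t * l₃ t) ^ ((4 : ℝ) / 3) ≤
          (l₂ t * l₃ t) ^ 2 + (l₁ t * l₃ t) ^ 2 + (l₁ t * l₂ t) ^ 2) ∧
      T ≤ (l₁ 0 * l₂ 0 * l₃ 0) ^ (-(1 : ℝ) / 3) := by
  set S : Set ℝ := Ico (0 : ℝ) T with hS
  set D : ℝ → ℝ := fun s => l₁ s * l₂ s * l₃ s with hDdef
  -- positivity of D
  have hDpos : ∀ t ∈ S, 0 < D t := fun t ht =>
    mul_pos (mul_pos (hpos t ht).1 (hpos t ht).2.1) (hpos t ht).2.2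
  -- derivative of D
  have hD : ∀ t ∈ S, HasDerivWithinAt D
      ((l₂ t * l₃ t) ^ 2 + (l₁ t * l₃ t) ^ 2 + (l₁ t * l₂ t) ^ 2) S t := by
    intro t ht
    have : HasDerivWithinAt D _ S t := ((h₁ t ht).mul (h₂ t ht)).mul (h₃ t ht)
    convert this using 1
    simp only [Pi.mul_apply]; ring
  -- the AM-GM inequality
  have key : ∀ t ∈ S, 3 * (D t) ^ ((4 : ℝ) / 3) ≤
      (l₂ t * l₃ t) ^ 2 + (l₁ t * l₃ t) ^ 2 + (l₁ t * l₂ t) ^ 2 := by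
    intro t ht
    set a := l₂ t * l₃ t
    set b := l₁ t * l₃ t
    set c := l₁ t * l₂ t
    have h := Real.geom_mean_le_arith_mean3_weighted (w₁ := 1/3) (w₂ := 1/3) (w₃ := 1/3)
      (p₁ := a ^ 2) (p₂ := b ^ 2) (p₃ := c ^ 2) (by norm_num) (by norm_num) (by norm_num)
      (sq_nonneg a) (sq_nonneg b) (sq_nonneg c) (by norm_num)
    rw [← Real.mul_rpow (sq_nonneg a) (sq_nonneg b),
        ← Real.mul_rpow (mul_nonneg (sq_nonneg a) (sq_nonneg b)) (sq_nonneg c)] at h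
    have habc : a ^ 2 * b ^ 2 * c ^ 2 = (D t) ^ (4 : ℕ) := by
      simp only [hDdef, a, b, c]; ring
    rw [habc, ← Real.rpow_natCast (D t) 4, ← Real.rpow_mul (hDpos t ht).le] at h
    norm_num at h
    linarith
  refine ⟨fun t ht => ⟨hD t ht, key t ht⟩, ?_⟩
  -- blow-up estimate via g s = D s ^ (-1/3) + s
  set g : ℝ → ℝ := fun s => D s ^ (-(1 : ℝ) / 3) + s with hgdef
  set g' : ℝ → ℝ := fun s =>
    ((l₂ s * l₃ s) ^ 2 + (l₁ s * l₃ s) ^ 2 + (l₁ s * l₂ s) ^ 2) * (-(1 : ℝ) / 3) *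
      D s ^ (-(1 : ℝ) / 3 - 1) + 1 with hg'def
  have hDcont : ContinuousOn D S := fun x hx => (hD x hx).continuousWithinAt
  have hgcont : ContinuousOn g S :=
    (hDcont.rpow_const fun x hx => Or.inl (hDpos x hx).ne').add continuousOn_id
  have hgderiv : ∀ t ∈ S, HasDerivWithinAt g (g' t) S t := fun t ht =>
    ((hD t ht).rpow_const (Or.inl (hDpos t ht).ne')).add (hasDerivWithinAt_id t S)
  have hint : interior S ⊆ S := interior_subset
  have hg'nonpos : ∀ t ∈ interior S, g' t ≤ 0 := by
    intro t ht'
    have ht := hint ht'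
    have hDt := hDpos t ht
    have hE : (0 : ℝ) < D t ^ (-(1 : ℝ) / 3 - 1) := Real.rpow_pos_of_pos hDt _
    have h1 : D t ^ ((4 : ℝ) / 3) * D t ^ (-(1 : ℝ) / 3 - 1) = 1 := by
      rw [← Real.rpow_add hDt]; norm_num
    have h2 := mul_le_mul_of_nonneg_right (key t ht) hE.le
    rw [mul_assoc, h1] at h2
    simp only [hg'def]
    nlinarith
  have hanti : AntitoneOn g S :=
    antitoneOn_of_hasDerivWithinAt_nonpos (convex_Ico 0 T) hgcont
      (fun x hx => (hgderiv x (hint hx)).mono hint) hg'nonpos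
  have h0S : (0 : ℝ) ∈ S := ⟨le_refl 0, hT⟩
  have hbound : ∀ t ∈ S, t < D 0 ^ (-(1 : ℝ) / 3) := by
    intro t ht
    have := hanti h0S ht ht.1
    have hDt' : (0 : ℝ) < D t ^ (-(1 : ℝ) / 3) := Real.rpow_pos_of_pos (hDpos t ht) _
    simp only [hgdef] at this
    linarith
  by_contra hcon
  push_neg at hcon
  have hA : (0 : ℝ) < D 0 ^ (-(1 : ℝ) / 3) := Real.rpow_pos_of_pos (hDpos 0 h0S) _
  exact absurd (hbound _ ⟨hA.le, hcon⟩) (lt_irrefl _)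
end
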